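/- Let p ≠ 3 be prime. Then the Fourier transform of λ_p : V(𝔽_p) → ℂ satisfies λ̂_p(g) = −1/p³ if the dual type of g is (111), (12), (3) or (1²1), and λ̂_p(g) = (p²−1)/p³ if the dual type of g is (1³) or g = 0. Moreover, for θ_{p²} := 2λ_{p²} − λ_p² (which takes the values 2, 2, −1, 1, 0, 0 on the types (111), (12), (3), (1²1), (1³), (0)), one has θ̂_{p²}(0) = p^{-4}·Σ_{f ∈ V(𝔽_p)} θ_{p²}(f) = 1 − 1/p². -/

import Mathlib

open scoped Classical
noncomputable section

/-- The twisted `GL₂`-action on binary cubic forms `f = (a,b,c,d) ↔ ax³+bx²y+cxy²+dy³`: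
`(γ·f)(x,y) = det(γ)⁻¹ · f((x,y)γ)`, written out on coefficients. -/
def matAct {R : Type*} [CommRing R] (γ : Matrix (Fin 2) (Fin 2) R) (f : Fin 4 → R) :
    Fin 4 → R :=
  let p := γ 0 0
  let q := γ 1 0
  let r := γ 0 1
  let s := γ 1 1
  fun i => Ring.inverse γ.det *
    ![f 0 * p ^ 3 + f 1 * p ^ 2 * r + f 2 * p * r ^ 2 + f 3 * r ^ 3,
      3 * f 0 * p ^ 2 * q + f 1 * (p ^ 2 * s + 2 * p * q * r) +
        f 2 * (q * r ^ 2 + 2 * p * r * s) + 3 * f 3 * r ^ 2 * s,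
      3 * f 0 * p * q ^ 2 + f 1 * (2 * p * q * s + q ^ 2 * r) +
        f 2 * (p * s ^ 2 + 2 * q * r * s) + 3 * f 3 * r * s ^ 2,
      f 0 * q ^ 3 + f 1 * q ^ 2 * s + f 2 * q * s ^ 2 + f 3 * s ^ 3] i

/-- The twisted action of the general linear group on binary cubic forms. -/
def glAct {R : Type*} [CommRing R] (γ : Matrix.GeneralLinearGroup (Fin 2) R)
    (f : Fin 4 → R) : Fin 4 → R :=
  matAct (γ : Matrix (Fin 2) (Fin 2) R) f

/-- The compatible `GL₂`-action on the dual space `V*`, with coordinates `(a*,b*,c*,d*)`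
corresponding to the form `a*x³+3b*x²y+3c*xy²+d*y³`; the integral polynomial formulas
are obtained from the twisted action through this correspondence. -/
def matActStar {R : Type*} [CommRing R] (γ : Matrix (Fin 2) (Fin 2) R) (g : Fin 4 → R) :
    Fin 4 → R :=
  let p := γ 0 0
  let q := γ 1 0
  let r := γ 0 1
  let s := γ 1 1
  fun i => Ring.inverse γ.det *
    ![g 0 * p ^ 3 + 3 * g 1 * p ^ 2 * r + 3 * g 2 * p * r ^ 2 + g 3 * r ^ 3,
      g 0 * p ^ 2 * q + g 1 * (p ^ 2 * s + 2 * p * q * r) +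
        g 2 * (q * r ^ 2 + 2 * p * r * s) + g 3 * r ^ 2 * s,
      g 0 * p * q ^ 2 + g 1 * (2 * p * q * s + q ^ 2 * r) +
        g 2 * (p * s ^ 2 + 2 * q * r * s) + g 3 * r * s ^ 2,
      g 0 * q ^ 3 + 3 * g 1 * q ^ 2 * s + 3 * g 2 * q * s ^ 2 + g 3 * s ^ 3] i

/-- The dual `GL₂`-action on `V*`. -/
def glActStar {R : Type*} [CommRing R] (γ : Matrix.GeneralLinearGroup (Fin 2) R)
    (g : Fin 4 → R) : Fin 4 → R :=
  matActStar (γ : Matrix (Fin 2) (Fin 2) R) g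

/-- The duality pairing `[f,g] = d·a* − c·b* + b·c* − a·d*`. -/
def bcfPair {R : Type*} [CommRing R] (f g : Fin 4 → R) : R :=
  f 3 * g 0 - f 2 * g 1 + f 1 * g 2 - f 0 * g 3

/-- The Fourier transform of a function on the space of binary cubic forms over `ℤ/nℤ`:
`φ̂(g) = n⁻⁴ ∑_f e^{2πi[f,g]/n} φ(f)`. -/
def bcfFourier (n : ℕ) (φ : (Fin 4 → ZMod n) → ℂ) (g : Fin 4 → ZMod n) : ℂ :=
  ((n : ℂ) ^ 4)⁻¹ * ∑' f : Fin 4 → ZMod n,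
    Complex.exp (2 * Real.pi * Complex.I * (ZMod.val (bcfPair f g) : ℂ) / (n : ℂ)) * φ f

/-- Evaluation of a binary cubic form. -/
def bcfEval {R : Type*} [CommRing R] (f : Fin 4 → R) (x y : R) : R :=
  f 0 * x ^ 3 + f 1 * x ^ 2 * y + f 2 * x * y ^ 2 + f 3 * y ^ 3

/-- Coefficients of the product `(u₁x+v₁y)(u₂x+v₂y)(u₃x+v₃y)` of three linear forms. -/
def linProd {R : Type*} [CommRing R] (u₁ v₁ u₂ v₂ u₃ v₃ : R) : Fin 4 → R :=
  ![u₁ * u₂ * u₃,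
    u₁ * u₂ * v₃ + u₁ * v₂ * u₃ + v₁ * u₂ * u₃,
    u₁ * v₂ * v₃ + v₁ * u₂ * v₃ + v₁ * v₂ * u₃,
    v₁ * v₂ * v₃]

/-- Coefficients of the product `(ux+vy)(Ax²+Bxy+Cy²)`. -/
def linQuadProd {R : Type*} [CommRing R] (u v A B C : R) : Fin 4 → R :=
  ![u * A, u * B + v * A, u * C + v * B, v * C]

/-- The six splitting types of a binary cubic form over `𝔽_p`. -/
inductive FpType : Type
  | t111 | t12 | t3 | t121 | t13 | t0

/-- `HasFpType f τ` : the binary cubic form `f` has splitting type `τ`: it factors into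
three pairwise non-proportional linear forms, a linear form times an irreducible
quadratic form, an irreducible cubic form (no nontrivial zero), `ℓ²m` with `ℓ,m`
non-proportional linear forms, `ℓ³` (up to a scalar), or is zero. -/
def HasFpType {R : Type*} [CommRing R] (f : Fin 4 → R) : FpType → Prop
  | FpType.t111 => ∃ u₁ v₁ u₂ v₂ u₃ v₃ : R,
      u₁ * v₂ - u₂ * v₁ ≠ 0 ∧ u₁ * v₃ - u₃ * v₁ ≠ 0 ∧ u₂ * v₃ - u₃ * v₂ ≠ 0 ∧
      f = linProd u₁ v₁ u₂ v₂ u₃ v₃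
  | FpType.t12 => ∃ u v A B C : R, ¬(u = 0 ∧ v = 0) ∧
      (∀ x y : R, ¬(x = 0 ∧ y = 0) → A * x ^ 2 + B * x * y + C * y ^ 2 ≠ 0) ∧
      f = linQuadProd u v A B C
  | FpType.t3 => ∀ x y : R, ¬(x = 0 ∧ y = 0) → bcfEval f x y ≠ 0
  | FpType.t121 => ∃ u₁ v₁ u₂ v₂ : R, u₁ * v₂ - u₂ * v₁ ≠ 0 ∧
      f = linProd u₁ v₁ u₁ v₁ u₂ v₂
  | FpType.t13 => ∃ u v c : R, c ≠ 0 ∧ ¬(u = 0 ∧ v = 0) ∧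
      f = fun i => c * linProd u v u v u v i
  | FpType.t0 => f = 0

/-- The dual type of `g ∈ V*(𝔽_p)`: the splitting type of the associated form
`a*x³+3b*x²y+3c*xy²+d*y³`. -/
def HasDualFpType {R : Type*} [CommRing R] (g : Fin 4 → R) (τ : FpType) : Prop :=
  HasFpType (![g 0, 3 * g 1, 3 * g 2, g 3]) τ

/-- The Artin character `λ_p` on binary cubic forms over `𝔽_p`, taking the values
`2, 0, −1, 1, 0, 0` on the types `(111), (12), (3), (1²1), (1³), (0)`. -/
def lamFp {R : Type*} [CommRing R] (f : Fin 4 → R) : ℂ :=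
  if HasFpType f FpType.t111 then 2
  else if HasFpType f FpType.t3 then -1
  else if HasFpType f FpType.t121 then 1
  else 0

/-- The character `λ_{p²}` on binary cubic forms over `𝔽_p`, taking the values
`3, 1, 0, 1, 0, 0` on the types `(111), (12), (3), (1²1), (1³), (0)`. -/
def lamFpSq {R : Type*} [CommRing R] (f : Fin 4 → R) : ℂ :=
  if HasFpType f FpType.t111 then 3
  else if HasFpType f FpType.t12 then 1
  else if HasFpType f FpType.t121 then 1
  else 0


set_option linter.unusedSectionVars false
set_option maxHeartbeats 1000000

namespace BCF
variable {p : ℕ} [Fact p.Prime]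

def psi (p : ℕ) (t : ZMod p) : ℂ :=
  Complex.exp (2 * Real.pi * Complex.I * (ZMod.val t : ℂ) / (p : ℂ))

lemma zeta_pow (t : ZMod p) :
    psi p t = Complex.exp (2 * Real.pi * Complex.I / (p : ℂ)) ^ (ZMod.val t) := by
  rw [← Complex.exp_nat_mul, psi]
  ring_nf

lemma hp0 : (p : ℂ) ≠ 0 := by
  exact_mod_cast (Fact.out : p.Prime).ne_zero

lemma zeta_pow_p : Complex.exp (2 * Real.pi * Complex.I / (p : ℂ)) ^ p = 1 := by
  rw [← Complex.exp_nat_mul, mul_div_assoc', mul_div_cancel_left₀ _ hp0,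
    Complex.exp_two_pi_mul_I]

lemma zeta_ne_one : Complex.exp (2 * Real.pi * Complex.I / (p : ℂ)) ≠ 1 := by
  intro h
  rw [Complex.exp_eq_one_iff] at h
  obtain ⟨n, hn⟩ := h
  have h2 : (2 * Real.pi * Complex.I) ≠ 0 := by
    simp [Real.pi_ne_zero, Complex.I_ne_zero, two_ne_zero]
  rw [div_eq_iff hp0] at hn
  have hnp : (1 : ℂ) = (n : ℂ) * (p : ℂ) := by
    have := mul_right_cancel₀ h2 (by linear_combination hn :
      (1:ℂ) * (2 * Real.pi * Complex.I) = ((n:ℂ) * (p:ℂ)) * (2 * Real.pi * Complex.I))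
    exact this
  have : ((1 : ℤ) : ℂ) = ((n * p : ℤ) : ℂ) := by push_cast; exact hnp
  have h1 : (1 : ℤ) = n * p := by exact_mod_cast this
  have hp2 := (Fact.out : p.Prime).two_le
  have : (p : ℤ) ∣ 1 := ⟨n, by linarith [h1]⟩
  have := Int.le_of_dvd one_pos this
  omega

lemma psi_zero : psi p 0 = 1 := by
  have : NeZero p := ⟨(Fact.out : p.Prime).ne_zero⟩
  simp [psi, ZMod.val_zero]

lemma psi_add (a b : ZMod p) : psi p (a + b) = psi p a * psi p b := by
  have : NeZero p := ⟨(Fact.out : p.Prime).ne_zero⟩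
  rw [zeta_pow, zeta_pow, zeta_pow, ← pow_add, ZMod.val_add]
  conv_rhs => rw [← Nat.div_add_mod (ZMod.val a + ZMod.val b) p]
  rw [pow_add, pow_mul, zeta_pow_p, one_pow, one_mul]

lemma sum_psi : ∑ x : ZMod p, psi p x = 0 := by
  have : NeZero p := ⟨(Fact.out : p.Prime).ne_zero⟩
  have h : ∑ x : ZMod p, psi p x
      = ∑ i ∈ Finset.range p, Complex.exp (2 * Real.pi * Complex.I / (p : ℂ)) ^ i := by
    apply Finset.sum_nbij' (fun x : ZMod p => ZMod.val x) (fun i : ℕ => (i : ZMod p))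
    · intro x _; exact Finset.mem_range.mpr (ZMod.val_lt x)
    · intro i _; exact Finset.mem_univ _
    · intro x _; exact ZMod.natCast_rightInverse x
    · intro i hi; exact ZMod.val_cast_of_lt (Finset.mem_range.mp hi)
    · intro x _; exact zeta_pow x
  rw [h, geom_sum_eq zeta_ne_one, zeta_pow_p, sub_self, zero_div]

lemma sum_psi_mul (c : ZMod p) :
    ∑ x : ZMod p, psi p (c * x) = if c = 0 then (p : ℂ) else 0 := by
  have : NeZero p := ⟨(Fact.out : p.Prime).ne_zero⟩
  split_ifs with hc
  · subst hc
    have h0 : ∀ x : ZMod p, psi p (0 * x) = 1 := fun x => by rw [zero_mul, psi_zero]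
    simp [h0, Finset.card_univ, ZMod.card, psi_zero]
  · rw [← sum_psi (p := p)]
    apply Finset.sum_nbij' (fun x : ZMod p => c * x) (fun y : ZMod p => c⁻¹ * y)
    · intro x _; exact Finset.mem_univ _
    · intro x _; exact Finset.mem_univ _
    · intro x _; field_simp
    · intro y _; field_simp
    · intro x _; rfl

/-! ### Summation over coefficient vectors -/

def vecE (K : Type*) : (K × K × K × K) ≃ (Fin 4 → K) where
  toFun x := ![x.1, x.2.1, x.2.2.1, x.2.2.2]
  invFun f := (f 0, f 1, f 2, f 3)
  left_inv x := by rfl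
  right_inv f := by
    funext i
    fin_cases i <;> rfl

lemma sum4 {K : Type*} [Fintype K] (F : (Fin 4 → K) → ℂ) :
    ∑ f : Fin 4 → K, F f = ∑ a : K, ∑ b : K, ∑ c : K, ∑ d : K, F ![a, b, c, d] := by
  rw [← Equiv.sum_comp (vecE K) F]
  rw [Fintype.sum_prod_type]
  refine Finset.sum_congr rfl fun a _ => ?_
  rw [Fintype.sum_prod_type]
  refine Finset.sum_congr rfl fun b _ => ?_
  rw [Fintype.sum_prod_type]
  rfl

end BCF

namespace BCF
variable {p : ℕ} [Fact p.Prime]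

def rt (f : Fin 4 → ZMod p) (t : ZMod p) : ZMod p :=
  f 0 * t ^ 3 + f 1 * t ^ 2 + f 2 * t + f 3

lemma pair4 (a b c d : ZMod p) (g : Fin 4 → ZMod p) :
    bcfPair ![a, b, c, d] g = d * g 0 - c * g 1 + b * g 2 - a * g 3 := rfl

lemma rt4 (a b c d t : ZMod p) : rt ![a, b, c, d] t = a * t ^ 3 + b * t ^ 2 + c * t + d := rfl

lemma triple_factor (A B C : ZMod p) :
    ∑ a : ZMod p, ∑ b : ZMod p, ∑ c : ZMod p, psi p (A * a + (B * b + C * c))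
      = (if A = 0 then (p : ℂ) else 0) * ((if B = 0 then (p : ℂ) else 0) *
          (if C = 0 then (p : ℂ) else 0)) := by
  rw [← sum_psi_mul A, ← sum_psi_mul B, ← sum_psi_mul C]
  calc ∑ a : ZMod p, ∑ b : ZMod p, ∑ c : ZMod p, psi p (A * a + (B * b + C * c))
      = ∑ a : ZMod p, psi p (A * a) * (∑ b : ZMod p, psi p (B * b) * (∑ c : ZMod p, psi p (C * c))) := by
        refine Finset.sum_congr rfl fun a _ => ?_
        rw [Finset.mul_sum]
        refine Finset.sum_congr rfl fun b _ => ?_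
        rw [Finset.mul_sum, Finset.mul_sum]
        refine Finset.sum_congr rfl fun c _ => ?_
        rw [psi_add, psi_add]
    _ = _ := by rw [← Finset.sum_mul, ← Finset.sum_mul]

lemma ite_triple (P Q R : Prop) [Decidable P] [Decidable Q] [Decidable R] :
    (if P then (p : ℂ) else 0) * ((if Q then (p : ℂ) else 0) * (if R then (p : ℂ) else 0))
      = if P ∧ Q ∧ R then (p : ℂ) ^ 3 else 0 := by
  split_ifs <;> simp_all <;> ring

lemma sum_root_some (g : Fin 4 → ZMod p) (t : ZMod p) :
    ∑ f : Fin 4 → ZMod p, (if rt f t = 0 then psi p (bcfPair f g) else 0)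
      = if (g 1 = -(t * g 0) ∧ g 2 = t ^ 2 * g 0 ∧ g 3 = -(t ^ 3 * g 0))
          then (p : ℂ) ^ 3 else 0 := by
  rw [sum4]
  have hd : ∀ a b c : ZMod p,
      ∑ d : ZMod p, (if rt ![a, b, c, d] t = 0 then psi p (bcfPair ![a, b, c, d] g) else 0)
        = psi p ((-(t^3 * g 0) - g 3) * a + ((g 2 - t^2 * g 0) * b + (-(t * g 0) - g 1) * c)) := by
    intro a b c
    have hcond : ∀ d : ZMod p, (rt ![a, b, c, d] t = 0) ↔ d = -(a * t^3 + b * t^2 + c * t) := by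
      intro d
      rw [rt4]
      constructor
      · intro h; linear_combination h
      · intro h; linear_combination h
    rw [Finset.sum_congr rfl fun d _ => if_congr (hcond d) rfl rfl]
    rw [Finset.sum_ite_eq' Finset.univ (-(a * t^3 + b * t^2 + c * t))
      (fun d => psi p (bcfPair ![a, b, c, d] g))]
    rw [if_pos (Finset.mem_univ _)]
    congr 1
    rw [pair4]
    ring
  rw [Finset.sum_congr rfl fun a _ => Finset.sum_congr rfl fun b _ =>
    Finset.sum_congr rfl fun c _ => hd a b c]
  rw [triple_factor, ite_triple]
  refine if_congr ?_ rfl rfl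
  constructor
  · rintro ⟨h1, h2, h3⟩
    exact ⟨by linear_combination -h3, by linear_combination h2, by linear_combination -h1⟩
  · rintro ⟨h1, h2, h3⟩
    exact ⟨by linear_combination -h3, by linear_combination h2, by linear_combination -h1⟩

lemma sum_root_none (g : Fin 4 → ZMod p) :
    ∑ f : Fin 4 → ZMod p, (if f 0 = 0 then psi p (bcfPair f g) else 0)
      = if (g 0 = 0 ∧ g 1 = 0 ∧ g 2 = 0) then (p : ℂ) ^ 3 else 0 := by
  rw [sum4]
  have key : ∀ a : ZMod p,
      (∑ b : ZMod p, ∑ c : ZMod p, ∑ d : ZMod p,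
        if (![a, b, c, d] : Fin 4 → ZMod p) 0 = 0 then psi p (bcfPair ![a, b, c, d] g) else 0)
      = if a = 0 then (∑ b : ZMod p, ∑ c : ZMod p, ∑ d : ZMod p,
          psi p (bcfPair ![a, b, c, d] g)) else 0 := by
    intro a
    have : ∀ b c d : ZMod p,
        (if (![a, b, c, d] : Fin 4 → ZMod p) 0 = 0 then psi p (bcfPair ![a, b, c, d] g) else 0)
        = if a = 0 then psi p (bcfPair ![a, b, c, d] g) else 0 := fun b c d => rfl
    simp only [this]
    split_ifs with h
    · rfl
    · simp
  rw [Finset.sum_congr rfl fun a _ => key a]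
  rw [Finset.sum_ite_eq' Finset.univ (0 : ZMod p)
    (fun a => ∑ b : ZMod p, ∑ c : ZMod p, ∑ d : ZMod p, psi p (bcfPair ![a, b, c, d] g))]
  rw [if_pos (Finset.mem_univ _)]
  have hpair : ∀ b c d : ZMod p,
      psi p (bcfPair ![(0 : ZMod p), b, c, d] g)
        = psi p (g 2 * b + (-(g 1) * c + g 0 * d)) := by
    intro b c d
    congr 1
    rw [pair4]
    ring
  rw [Finset.sum_congr rfl fun b _ => Finset.sum_congr rfl fun c _ =>
    Finset.sum_congr rfl fun d _ => hpair b c d]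
  rw [triple_factor, ite_triple]
  refine if_congr ?_ rfl rfl
  constructor
  · rintro ⟨h1, h2, h3⟩
    exact ⟨h3, by linear_combination -h2, h1⟩
  · rintro ⟨h1, h2, h3⟩
    exact ⟨h3, by linear_combination -h2, h1⟩

lemma sum_psi_pair (g : Fin 4 → ZMod p) :
    ∑ f : Fin 4 → ZMod p, psi p (bcfPair f g)
      = if g = 0 then (p : ℂ) ^ 4 else 0 := by
  rw [sum4]
  have hd : ∀ a b c : ZMod p,
      ∑ d : ZMod p, psi p (bcfPair ![a, b, c, d] g)
        = psi p ((- g 3) * a + ((g 2) * b + (-(g 1)) * c)) * (if g 0 = 0 then (p:ℂ) else 0) := by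
    intro a b c
    rw [← sum_psi_mul (g 0), Finset.mul_sum]
    refine Finset.sum_congr rfl fun d _ => ?_
    rw [← psi_add]
    congr 1
    rw [pair4]
    ring
  rw [Finset.sum_congr rfl fun a _ => Finset.sum_congr rfl fun b _ =>
    Finset.sum_congr rfl fun c _ => hd a b c]
  simp only [← Finset.sum_mul]
  rw [triple_factor, ite_triple]
  by_cases h0 : g = 0
  · rw [if_pos h0, if_pos, if_pos]
    · ring
    · rw [h0]; rfl
    · rw [h0]; simp
  · rw [if_neg h0]
    by_cases hg : (-(g 3) = 0 ∧ g 2 = 0 ∧ -(g 1) = 0)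
    · rw [if_pos hg]
      have : ¬ g 0 = 0 := by
        intro h00
        apply h0
        funext i
        fin_cases i
        · exact h00
        · exact neg_eq_zero.mp hg.2.2
        · exact hg.2.1
        · exact neg_eq_zero.mp hg.1
      rw [if_neg this, mul_zero]
    · rw [if_neg hg, zero_mul]

end BCF

namespace BCF
variable {p : ℕ} [Fact p.Prime]

/-! ### coefficient extraction -/

lemma lp0 (u₁ v₁ u₂ v₂ u₃ v₃ : ZMod p) : linProd u₁ v₁ u₂ v₂ u₃ v₃ 0 = u₁ * u₂ * u₃ := rfl
lemma lp1 (u₁ v₁ u₂ v₂ u₃ v₃ : ZMod p) :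
    linProd u₁ v₁ u₂ v₂ u₃ v₃ 1 = u₁ * u₂ * v₃ + u₁ * v₂ * u₃ + v₁ * u₂ * u₃ := rfl
lemma lp2 (u₁ v₁ u₂ v₂ u₃ v₃ : ZMod p) :
    linProd u₁ v₁ u₂ v₂ u₃ v₃ 2 = u₁ * v₂ * v₃ + v₁ * u₂ * v₃ + v₁ * v₂ * u₃ := rfl
lemma lp3 (u₁ v₁ u₂ v₂ u₃ v₃ : ZMod p) : linProd u₁ v₁ u₂ v₂ u₃ v₃ 3 = v₁ * v₂ * v₃ := rfl

lemma lqp0 (u v A B C : ZMod p) : linQuadProd u v A B C 0 = u * A := rfl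
lemma lqp1 (u v A B C : ZMod p) : linQuadProd u v A B C 1 = u * B + v * A := rfl
lemma lqp2 (u v A B C : ZMod p) : linQuadProd u v A B C 2 = u * C + v * B := rfl
lemma lqp3 (u v A B C : ZMod p) : linQuadProd u v A B C 3 = v * C := rfl

lemma funext4 {f g : Fin 4 → ZMod p} (h0 : f 0 = g 0) (h1 : f 1 = g 1) (h2 : f 2 = g 2)
    (h3 : f 3 = g 3) : f = g := by
  funext i
  fin_cases i <;> assumption

lemma ne_zero4 {f : Fin 4 → ZMod p} (i : Fin 4) (h : f i ≠ 0) : f ≠ 0 := by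
  intro h0; rw [h0] at h; exact h rfl

/-! ### evaluation -/

lemma bcfEval_linProd (u₁ v₁ u₂ v₂ u₃ v₃ x y : ZMod p) :
    bcfEval (linProd u₁ v₁ u₂ v₂ u₃ v₃) x y
      = (u₁ * x + v₁ * y) * ((u₂ * x + v₂ * y) * (u₃ * x + v₃ * y)) := by
  unfold bcfEval
  rw [lp0, lp1, lp2, lp3]
  ring

lemma bcfEval_linQuadProd (u v A B C x y : ZMod p) :
    bcfEval (linQuadProd u v A B C) x y
      = (u * x + v * y) * (A * x ^ 2 + B * x * y + C * y ^ 2) := by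
  unfold bcfEval
  rw [lqp0, lqp1, lqp2, lqp3]
  ring

lemma rt_eq (f : Fin 4 → ZMod p) (t : ZMod p) : rt f t = bcfEval f t 1 := by
  unfold rt bcfEval; ring

lemma rt_linProd (u₁ v₁ u₂ v₂ u₃ v₃ t : ZMod p) :
    rt (linProd u₁ v₁ u₂ v₂ u₃ v₃) t
      = (u₁ * t + v₁) * ((u₂ * t + v₂) * (u₃ * t + v₃)) := by
  rw [rt_eq, bcfEval_linProd]; ring_nf

lemma rt_linQuadProd (u v A B C t : ZMod p) :
    rt (linQuadProd u v A B C) t = (u * t + v) * (A * t ^ 2 + B * t + C) := by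
  rw [rt_eq, bcfEval_linQuadProd]; ring_nf

/-! ### roots -/

def ocond (f : Fin 4 → ZMod p) : Option (ZMod p) → Prop
  | some t => rt f t = 0
  | none => f 0 = 0

def nR (f : Fin 4 → ZMod p) : ℕ := (Finset.univ.filter (fun o => ocond f o)).card

def lroot (u v : ZMod p) : Option (ZMod p) → Prop
  | some t => u * t + v = 0
  | none => u = 0

def prt (u v : ZMod p) : Option (ZMod p) := if u = 0 then none else some (-(v * u⁻¹))

lemma lroot_iff {u v : ZMod p} (h : ¬(u = 0 ∧ v = 0)) (o : Option (ZMod p)) :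
    lroot u v o ↔ o = prt u v := by
  cases o with
  | none =>
    unfold lroot prt
    split_ifs with hu
    · simpa using hu
    · simpa using hu
  | some t =>
    unfold lroot prt
    split_ifs with hu
    · subst hu
      have hv : v ≠ 0 := fun hv => h ⟨rfl, hv⟩
      simp [hv]
    · simp only [Option.some.injEq]
      constructor
      · intro ht
        field_simp
        linear_combination ht
      · intro ht
        subst ht
        field_simp
        ring

lemma prt_ne {u₁ v₁ u₂ v₂ : ZMod p} (hd : u₁ * v₂ - u₂ * v₁ ≠ 0) :
    prt u₁ v₁ ≠ prt u₂ v₂ := by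
  unfold prt
  split_ifs with h1 h2 h2
  · subst h1; subst h2; simp at hd
  · simp
  · simp
  · simp only [ne_eq, Option.some.injEq]
    intro h
    apply hd
    field_simp at h
    linear_combination h

lemma lin_prop {u v u' v' : ZMod p} (h : ¬(u = 0 ∧ v = 0)) (h' : ¬(u' = 0 ∧ v' = 0))
    (hd : u * v' - u' * v = 0) : ∃ c : ZMod p, c ≠ 0 ∧ u' = c * u ∧ v' = c * v := by
  by_cases hu : u = 0
  · subst hu
    have hv : v ≠ 0 := fun hv => h ⟨rfl, hv⟩
    have hu' : u' = 0 := by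
      have : u' * v = 0 := by linear_combination -hd
      rcases mul_eq_zero.mp this with h1 | h1
      · exact h1
      · exact absurd h1 hv
    subst hu'
    have hv' : v' ≠ 0 := fun hv' => h' ⟨rfl, hv'⟩
    refine ⟨v' * v⁻¹, mul_ne_zero hv' (inv_ne_zero hv), by ring, ?_⟩
    field_simp
  · refine ⟨u' * u⁻¹, ?_, by field_simp, ?_⟩
    · intro hc
      have hu' : u' = 0 := by
        have := mul_eq_zero.mp hc
        rcases this with h1 | h1
        · exact h1
        · exact absurd (inv_eq_zero.mp h1) hu
      apply h'
      refine ⟨hu', ?_⟩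
      subst hu'
      have : u * v' = 0 := by linear_combination hd
      rcases mul_eq_zero.mp this with h1 | h1
      · exact absurd h1 hu
      · exact h1
    · have h2 : u * v' = u' * v := by linear_combination hd
      field_simp
      linear_combination h2

/-! ### root sets -/

lemma ocond_linProd {u₁ v₁ u₂ v₂ u₃ v₃ : ZMod p} (o : Option (ZMod p)) :
    ocond (linProd u₁ v₁ u₂ v₂ u₃ v₃) o ↔ (lroot u₁ v₁ o ∨ lroot u₂ v₂ o ∨ lroot u₃ v₃ o) := by
  cases o with
  | none => simp [ocond, lroot, lp0, mul_eq_zero, or_assoc]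
  | some t => simp [ocond, lroot, rt_linProd, mul_eq_zero]

lemma ocond_linQuadProd {u v A B C : ZMod p} (hirr : ∀ x y : ZMod p, ¬(x = 0 ∧ y = 0) →
    A * x ^ 2 + B * x * y + C * y ^ 2 ≠ 0) (o : Option (ZMod p)) :
    ocond (linQuadProd u v A B C) o ↔ lroot u v o := by
  have hA : A ≠ 0 := by
    intro hA
    apply hirr 1 0 (by simp)
    rw [hA]; ring
  cases o with
  | none =>
    simp only [ocond, lroot, lqp0, mul_eq_zero]
    exact ⟨fun h => h.resolve_right hA, Or.inl⟩
  | some t =>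
    simp only [ocond, lroot, rt_linQuadProd, mul_eq_zero]
    have : A * t ^ 2 + B * t + C ≠ 0 := by
      have := hirr t 1 (by simp)
      intro hq
      apply this
      linear_combination hq
    exact ⟨fun h => h.resolve_right this, Or.inl⟩

lemma nR_eq_three {f : Fin 4 → ZMod p} {x y z : Option (ZMod p)} (hxy : x ≠ y) (hxz : x ≠ z)
    (hyz : y ≠ z) (h : ∀ o, ocond f o ↔ (o = x ∨ o = y ∨ o = z)) : nR f = 3 := by
  unfold nR
  have : Finset.univ.filter (fun o => ocond f o) = {x, y, z} := by
    ext o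
    simp [h o]
  rw [this]
  rw [Finset.card_insert_of_notMem (by simp [hxy, hxz]),
    Finset.card_insert_of_notMem (by simp [hyz]), Finset.card_singleton]

lemma nR_eq_two {f : Fin 4 → ZMod p} {x y : Option (ZMod p)} (hxy : x ≠ y)
    (h : ∀ o, ocond f o ↔ (o = x ∨ o = y)) : nR f = 2 := by
  unfold nR
  have : Finset.univ.filter (fun o => ocond f o) = {x, y} := by
    ext o
    simp [h o]
  rw [this, Finset.card_insert_of_notMem (by simp [hxy]), Finset.card_singleton]

lemma nR_eq_one {f : Fin 4 → ZMod p} {x : Option (ZMod p)}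
    (h : ∀ o, ocond f o ↔ o = x) : nR f = 1 := by
  unfold nR
  have : Finset.univ.filter (fun o => ocond f o) = {x} := by
    ext o
    simp [h o]
  rw [this, Finset.card_singleton]

lemma nR_eq_zero {f : Fin 4 → ZMod p} (h : ∀ o, ¬ ocond f o) : nR f = 0 := by
  unfold nR
  have : Finset.univ.filter (fun o => ocond f o) = ∅ := by
    ext o
    simp [h o]
  rw [this, Finset.card_empty]

end BCF

namespace BCF
variable {p : ℕ} [Fact p.Prime]

/-! ### factorization identities -/

lemma fac_some {f : Fin 4 → ZMod p} {t : ZMod p} (h : rt f t = 0) :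
    f = linQuadProd 1 (-t) (f 0) (f 1 + t * f 0) (f 2 + t * f 1 + t ^ 2 * f 0) := by
  unfold rt at h
  refine funext4 ?_ ?_ ?_ ?_
  · rw [lqp0]; ring
  · rw [lqp1]; ring
  · rw [lqp2]; ring
  · rw [lqp3]; linear_combination h

lemma fac_none {f : Fin 4 → ZMod p} (h : f 0 = 0) :
    f = linQuadProd 0 1 (f 1) (f 2) (f 3) := by
  refine funext4 ?_ ?_ ?_ ?_
  · rw [lqp0, h]; ring
  · rw [lqp1]; ring
  · rw [lqp2]; ring
  · rw [lqp3]; ring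

lemma quad_root_factor {A B C s : ZMod p} (h : A * s ^ 2 + B * s + C = 0) (u v : ZMod p) :
    linQuadProd u v A B C = linProd u v 1 (-s) A (B + s * A) := by
  refine funext4 ?_ ?_ ?_ ?_
  · rw [lqp0, lp0]; ring
  · rw [lqp1, lp1]; ring
  · rw [lqp2, lp2]; linear_combination u * h
  · rw [lqp3, lp3]; linear_combination v * h

lemma quad_A0_factor {A : ZMod p} (h : A = 0) (u v B C : ZMod p) :
    linQuadProd u v A B C = linProd u v 0 1 B C := by
  subst h
  refine funext4 ?_ ?_ ?_ ?_
  · rw [lqp0, lp0]; ring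
  · rw [lqp1, lp1]; ring
  · rw [lqp2, lp2]; ring
  · rw [lqp3, lp3]; ring

lemma lqp_zero (u v : ZMod p) : linQuadProd u v 0 0 0 = (0 : Fin 4 → ZMod p) := by
  refine funext4 ?_ ?_ ?_ ?_ <;>
    simp [lqp0, lqp1, lqp2, lqp3]

lemma lqp_zero' (A B C : ZMod p) : linQuadProd 0 0 A B C = (0 : Fin 4 → ZMod p) := by
  refine funext4 ?_ ?_ ?_ ?_ <;>
    simp [lqp0, lqp1, lqp2, lqp3]

lemma lqp_smul (c u v A B C : ZMod p) :
    linQuadProd (c * u) (c * v) A B C = linQuadProd u v (c * A) (c * B) (c * C) := by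
  refine funext4 ?_ ?_ ?_ ?_ <;> simp only [lqp0, lqp1, lqp2, lqp3] <;> ring

lemma lqp_cancel {u v A B C A' B' C' : ZMod p} (h : ¬(u = 0 ∧ v = 0))
    (heq : linQuadProd u v A B C = linQuadProd u v A' B' C') :
    A = A' ∧ B = B' ∧ C = C' := by
  have h0 := congrFun heq 0
  have h1 := congrFun heq 1
  have h2 := congrFun heq 2
  have h3 := congrFun heq 3
  rw [lqp0, lqp0] at h0
  rw [lqp1, lqp1] at h1
  rw [lqp2, lqp2] at h2
  rw [lqp3, lqp3] at h3
  by_cases hu : u = 0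
  · subst hu
    have hv : v ≠ 0 := fun hv => h ⟨rfl, hv⟩
    have hA : A = A' := by
      have : v * A = v * A' := by linear_combination h1
      exact mul_left_cancel₀ hv this
    have hB : B = B' := by
      have : v * B = v * B' := by linear_combination h2
      exact mul_left_cancel₀ hv this
    have hC : C = C' := by
      have : v * C = v * C' := by linear_combination h3
      exact mul_left_cancel₀ hv this
    exact ⟨hA, hB, hC⟩
  · have hA : A = A' := mul_left_cancel₀ hu h0
    have hB : B = B' := by
      have : u * B = u * B' := by rw [hA] at h1; linear_combination h1
      exact mul_left_cancel₀ hu this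
    have hC : C = C' := by
      have : u * C = u * C' := by rw [hB] at h2; linear_combination h2
      exact mul_left_cancel₀ hu this
    exact ⟨hA, hB, hC⟩

lemma lp_move (u v w z a : ZMod p) :
    linProd u v (a * u) (a * v) w z = linProd u v u v (a * w) (a * z) := by
  refine funext4 ?_ ?_ ?_ ?_ <;>
    simp only [lp0, lp1, lp2, lp3] <;> ring

lemma lp_swap12 (u₁ v₁ u₂ v₂ u₃ v₃ : ZMod p) :
    linProd u₁ v₁ u₂ v₂ u₃ v₃ = linProd u₂ v₂ u₁ v₁ u₃ v₃ := by
  refine funext4 ?_ ?_ ?_ ?_ <;>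
    simp only [lp0, lp1, lp2, lp3] <;> ring

lemma lp_swap23 (u₁ v₁ u₂ v₂ u₃ v₃ : ZMod p) :
    linProd u₁ v₁ u₂ v₂ u₃ v₃ = linProd u₁ v₁ u₃ v₃ u₂ v₂ := by
  refine funext4 ?_ ?_ ?_ ?_ <;>
    simp only [lp0, lp1, lp2, lp3] <;> ring

lemma lp_cube (u v a b : ZMod p) :
    linProd u v (a * u) (a * v) (b * u) (b * v)
      = fun i => (a * b) * linProd u v u v u v i := by
  refine funext4 ?_ ?_ ?_ ?_ <;>
    simp only [lp0, lp1, lp2, lp3] <;> ring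

lemma cube_as_lqp (c u v : ZMod p) :
    (fun i => c * linProd u v u v u v i)
      = linQuadProd u v (c * (u * u)) (c * (u * v + v * u)) (c * (v * v)) := by
  refine funext4 ?_ ?_ ?_ ?_ <;>
    simp only [lqp0, lqp1, lqp2, lqp3, lp0, lp1, lp2, lp3] <;> ring

/-! ### nonvanishing of factored forms -/

lemma lp_nz3 {u₁ v₁ u₂ v₂ u₃ v₃ : ZMod p} (d12 : u₁ * v₂ - u₂ * v₁ ≠ 0)
    (d13 : u₁ * v₃ - u₃ * v₁ ≠ 0) (d23 : u₂ * v₃ - u₃ * v₂ ≠ 0) :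
    linProd u₁ v₁ u₂ v₂ u₃ v₃ ≠ 0 := by
  intro h0
  have c0 := congrFun h0 0
  have c1 := congrFun h0 1
  rw [lp0] at c0
  rw [lp1] at c1
  simp only [Pi.zero_apply] at c0 c1
  rcases mul_eq_zero.mp c0 with h | hu3
  · rcases mul_eq_zero.mp h with hu1 | hu2
    · have hv1 : v₁ ≠ 0 := by
        intro hv1
        apply d12; rw [hu1, hv1]; ring
      have : v₁ * u₂ * u₃ = 0 := by
        rw [hu1] at c1; linear_combination c1
      rcases mul_eq_zero.mp this with h | hu3
      · rcases mul_eq_zero.mp h with h | hu2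
        · exact hv1 h
        · exact d12 (by rw [hu1, hu2]; ring)
      · exact d13 (by rw [hu1, hu3]; ring)
    · have hv2 : v₂ ≠ 0 := by
        intro hv2
        apply d12; rw [hu2, hv2]; ring
      have : u₁ * v₂ * u₃ = 0 := by
        rw [hu2] at c1; linear_combination c1
      rcases mul_eq_zero.mp this with h | hu3
      · rcases mul_eq_zero.mp h with hu1 | h
        · exact d12 (by rw [hu1, hu2]; ring)
        · exact hv2 h
      · exact d23 (by rw [hu2, hu3]; ring)
  · have hv3 : v₃ ≠ 0 := by
      intro hv3
      apply d13; rw [hu3, hv3]; ring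
    have : u₁ * u₂ * v₃ = 0 := by
      rw [hu3] at c1; linear_combination c1
    rcases mul_eq_zero.mp this with h | h
    · rcases mul_eq_zero.mp h with hu1 | hu2
      · exact d13 (by rw [hu1, hu3]; ring)
      · exact d23 (by rw [hu2, hu3]; ring)
    · exact hv3 h

lemma lp_nz121 {u₁ v₁ u₂ v₂ : ZMod p} (d : u₁ * v₂ - u₂ * v₁ ≠ 0) :
    linProd u₁ v₁ u₁ v₁ u₂ v₂ ≠ 0 := by
  intro h0
  have c0 := congrFun h0 0
  have c1 := congrFun h0 1
  have c2 := congrFun h0 2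
  rw [lp0] at c0
  rw [lp1] at c1
  rw [lp2] at c2
  simp only [Pi.zero_apply] at c0 c1 c2
  by_cases hu1 : u₁ = 0
  · have hv1 : v₁ ≠ 0 := by
      intro hv1
      apply d; rw [hu1, hv1]; ring
    have : v₁ * (v₁ * u₂) = 0 := by rw [hu1] at c2; linear_combination c2
    rcases mul_eq_zero.mp this with h | h
    · exact hv1 h
    · rcases mul_eq_zero.mp h with h | hu2
      · exact hv1 h
      · exact d (by rw [hu1, hu2]; ring)
  · have hu2 : u₂ = 0 := by
      rcases mul_eq_zero.mp c0 with h | h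
      · rcases mul_eq_zero.mp h with h | h <;> exact absurd h hu1
      · exact h
    have hv2 : v₂ = 0 := by
      have : u₁ * (u₁ * v₂) = 0 := by rw [hu2] at c1; linear_combination c1
      rcases mul_eq_zero.mp this with h | h
      · exact absurd h hu1
      · rcases mul_eq_zero.mp h with h | h
        · exact absurd h hu1
        · exact h
    exact d (by rw [hu2, hv2]; ring)

lemma lqp_nz {u v A B C : ZMod p} (hnz : ¬(u = 0 ∧ v = 0))
    (hirr : ∀ x y : ZMod p, ¬(x = 0 ∧ y = 0) → A * x ^ 2 + B * x * y + C * y ^ 2 ≠ 0) :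
    linQuadProd u v A B C ≠ 0 := by
  have hA : A ≠ 0 := by
    intro hA; apply hirr 1 0 (by simp); rw [hA]; ring
  have hC : C ≠ 0 := by
    intro hC; apply hirr 0 1 (by simp); rw [hC]; ring
  intro h0
  have c0 := congrFun h0 0
  have c3 := congrFun h0 3
  rw [lqp0] at c0
  rw [lqp3] at c3
  simp only [Pi.zero_apply] at c0 c3
  apply hnz
  constructor
  · rcases mul_eq_zero.mp c0 with h | h
    · exact h
    · exact absurd h hA
  · rcases mul_eq_zero.mp c3 with h | h
    · exact h
    · exact absurd h hC

lemma cube_nz {c u v : ZMod p} (hc : c ≠ 0) (hnz : ¬(u = 0 ∧ v = 0)) :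
    (fun i => c * linProd u v u v u v i) ≠ (0 : Fin 4 → ZMod p) := by
  intro h0
  apply hnz
  have c0 := congrFun h0 0
  have c3 := congrFun h0 3
  simp only [Pi.zero_apply] at c0 c3
  rw [show linProd u v u v u v 0 = u * u * u from rfl] at c0
  rw [show linProd u v u v u v 3 = v * v * v from rfl] at c3
  constructor
  · have := mul_eq_zero.mp c0
    rcases this with h | h
    · exact absurd h hc
    · rcases mul_eq_zero.mp h with h | h
      · rcases mul_eq_zero.mp h with h | h <;> exact h
      · exact h
  · have := mul_eq_zero.mp c3
    rcases this with h | h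
    · exact absurd h hc
    · rcases mul_eq_zero.mp h with h | h
      · rcases mul_eq_zero.mp h with h | h <;> exact h
      · exact h

end BCF

namespace BCF
variable {p : ℕ} [Fact p.Prime]

lemma nz_of_det {u₁ v₁ u₂ v₂ : ZMod p} (d : u₁ * v₂ - u₂ * v₁ ≠ 0) :
    ¬(u₁ = 0 ∧ v₁ = 0) := by
  rintro ⟨h1, h2⟩
  apply d; rw [h1, h2]; ring

lemma nz_of_det' {u₁ v₁ u₂ v₂ : ZMod p} (d : u₁ * v₂ - u₂ * v₁ ≠ 0) :
    ¬(u₂ = 0 ∧ v₂ = 0) := by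
  rintro ⟨h1, h2⟩
  apply d; rw [h1, h2]; ring

lemma nR_t111 {f : Fin 4 → ZMod p} (h : HasFpType f FpType.t111) : nR f = 3 := by
  obtain ⟨u₁, v₁, u₂, v₂, u₃, v₃, d12, d13, d23, rfl⟩ := h
  refine nR_eq_three (prt_ne d12) (prt_ne d13) (prt_ne d23) fun o => ?_
  rw [ocond_linProd, lroot_iff (nz_of_det d12), lroot_iff (nz_of_det' d12),
    lroot_iff (nz_of_det' d13)]

lemma nR_t121 {f : Fin 4 → ZMod p} (h : HasFpType f FpType.t121) : nR f = 2 := by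
  obtain ⟨u₁, v₁, u₂, v₂, d, rfl⟩ := h
  refine nR_eq_two (prt_ne d) fun o => ?_
  rw [ocond_linProd, lroot_iff (nz_of_det d), lroot_iff (nz_of_det' d), or_self_left]

lemma nR_t12 {f : Fin 4 → ZMod p} (h : HasFpType f FpType.t12) : nR f = 1 := by
  obtain ⟨u, v, A, B, C, hnz, hirr, rfl⟩ := h
  refine nR_eq_one (x := prt u v) fun o => ?_
  rw [ocond_linQuadProd hirr, lroot_iff hnz]

lemma eval_one_zero (f : Fin 4 → ZMod p) : bcfEval f 1 0 = f 0 := by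
  unfold bcfEval; ring

lemma eval_scale (f : Fin 4 → ZMod p) {x y : ZMod p} (hy : y ≠ 0) :
    bcfEval f x y = y ^ 3 * rt f (x * y⁻¹) := by
  unfold bcfEval rt
  field_simp

lemma t3_nR {f : Fin 4 → ZMod p} (h : HasFpType f FpType.t3) : nR f = 0 := by
  refine nR_eq_zero fun o => ?_
  cases o with
  | none =>
    intro h0
    exact h 1 0 (by simp) (by rw [eval_one_zero]; exact h0)
  | some t =>
    intro h0
    exact h t 1 (by simp) (by rw [← rt_eq]; exact h0)

lemma nR0_t3 {f : Fin 4 → ZMod p} (h : nR f = 0) : HasFpType f FpType.t3 := by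
  have hno : ∀ o, ¬ ocond f o := by
    intro o ho
    have : o ∈ Finset.univ.filter (fun o => ocond f o) := by
      simp [ho]
    rw [Finset.card_eq_zero.mp h] at this
    exact absurd this (Finset.notMem_empty o)
  intro x y hxy heval
  by_cases hy : y = 0
  · have hx : x ≠ 0 := fun hx => hxy ⟨hx, hy⟩
    apply hno none
    show f 0 = 0
    subst hy
    unfold bcfEval at heval
    have h30 : f 0 * x ^ 3 = 0 := by linear_combination heval
    rcases mul_eq_zero.mp h30 with h | h
    · exact h
    · exact absurd h (pow_ne_zero 3 hx)
  · apply hno (some (x * y⁻¹))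
    show rt f (x * y⁻¹) = 0
    have := eval_scale f (x := x) hy
    rw [heval] at this
    rcases mul_eq_zero.mp this.symm with h | h
    · exact absurd h (pow_ne_zero 3 hy)
    · exact h

lemma rt_smul (c : ZMod p) (h : Fin 4 → ZMod p) (t : ZMod p) :
    rt (fun i => c * h i) t = c * rt h t := by
  show c * h 0 * t ^ 3 + c * h 1 * t ^ 2 + c * h 2 * t + c * h 3 = _
  unfold rt; ring

lemma ocond_cube {c u v : ZMod p} (hc : c ≠ 0) (o : Option (ZMod p)) :
    ocond (fun i => c * linProd u v u v u v i) o ↔ lroot u v o := by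
  cases o with
  | none =>
    show c * linProd u v u v u v 0 = 0 ↔ u = 0
    rw [lp0]
    constructor
    · intro h
      rcases mul_eq_zero.mp h with h | h
      · exact absurd h hc
      · rcases mul_eq_zero.mp h with h | h
        · rcases mul_eq_zero.mp h with h | h <;> exact h
        · exact h
    · intro h; rw [h]; ring
  | some t =>
    show rt (fun i => c * linProd u v u v u v i) t = 0 ↔ u * t + v = 0
    rw [rt_smul, rt_linProd]
    constructor
    · intro h
      rcases mul_eq_zero.mp h with h | h
      · exact absurd h hc
      · rcases mul_eq_zero.mp h with h | h
        · exact h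
        · rcases mul_eq_zero.mp h with h | h <;> exact h
    · intro h; rw [h]; ring

lemma nR_t13 {f : Fin 4 → ZMod p} (h : HasFpType f FpType.t13) : nR f = 1 := by
  obtain ⟨u, v, c, hc, hnz, rfl⟩ := h
  refine nR_eq_one (x := prt u v) fun o => ?_
  rw [ocond_cube hc, lroot_iff hnz]

lemma lamFp_zero : lamFp (0 : Fin 4 → ZMod p) = 0 := by
  unfold lamFp
  rw [if_neg, if_neg, if_neg]
  · rintro ⟨u₁, v₁, u₂, v₂, d, h⟩
    exact lp_nz121 d h.symm
  · intro h
    exact h 1 0 (by simp) (by unfold bcfEval; simp)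
  · rintro ⟨u₁, v₁, u₂, v₂, u₃, v₃, d12, d13, d23, h⟩
    exact lp_nz3 d12 d13 d23 h.symm

lemma lamFpSq_zero : lamFpSq (0 : Fin 4 → ZMod p) = 0 := by
  unfold lamFpSq
  rw [if_neg, if_neg, if_neg]
  · rintro ⟨u₁, v₁, u₂, v₂, d, h⟩
    exact lp_nz121 d h.symm
  · rintro ⟨u, v, A, B, C, hnz, hirr, h⟩
    exact lqp_nz hnz hirr h.symm
  · rintro ⟨u₁, v₁, u₂, v₂, u₃, v₃, d12, d13, d23, h⟩
    exact lp_nz3 d12 d13 d23 h.symm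

lemma nR_zero_form : nR (0 : Fin 4 → ZMod p) = p + 1 := by
  unfold nR
  have : Finset.univ.filter (fun o => ocond (0 : Fin 4 → ZMod p) o) = Finset.univ := by
    refine Finset.filter_true_of_mem fun o _ => ?_
    cases o with
    | none => show (0 : Fin 4 → ZMod p) 0 = 0; rfl
    | some t => show rt 0 t = 0; unfold rt; simp
  rw [this, Finset.card_univ, Fintype.card_option, ZMod.card]

end BCF

namespace BCF
variable {p : ℕ} [Fact p.Prime]

def Qset (f : Fin 4 → ZMod p) : Finset (ZMod p × ZMod p) :=
  Finset.univ.filter fun q =>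
    (∀ x y : ZMod p, ¬(x = 0 ∧ y = 0) → 1 * x ^ 2 + q.1 * x * y + q.2 * y ^ 2 ≠ 0) ∧
    ∃ u v : ZMod p, f = linQuadProd u v 1 q.1 q.2

def Qn (f : Fin 4 → ZMod p) : ℕ := (Qset f).card

lemma prt_eq_det {u v u' v' : ZMod p} (h : prt u v = prt u' v') : u * v' - u' * v = 0 := by
  unfold prt at h
  split_ifs at h with h1 h2 h2
  · rw [h1, h2]; ring
  · rw [Option.some.injEq] at h
    have h3 : v * u⁻¹ = v' * u'⁻¹ := by
      have := neg_injective h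
      exact this
    field_simp at h3
    linear_combination -h3

lemma nR_of_mem_Qset {f : Fin 4 → ZMod p} {q : ZMod p × ZMod p} (hf : f ≠ 0)
    (hm : q ∈ Qset f) : nR f = 1 := by
  rw [Qset, Finset.mem_filter] at hm
  obtain ⟨-, hirr, u, v, rfl⟩ := hm
  have hnz : ¬(u = 0 ∧ v = 0) := by
    rintro ⟨rfl, rfl⟩
    exact hf (lqp_zero' _ _ _)
  refine nR_eq_one (x := prt u v) fun o => ?_
  rw [ocond_linQuadProd hirr, lroot_iff hnz]

lemma Qn_zero_of_nR {f : Fin 4 → ZMod p} (hf : f ≠ 0) (h : nR f ≠ 1) : Qn f = 0 := by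
  unfold Qn
  rw [Finset.card_eq_zero]
  by_contra hne
  obtain ⟨q, hq⟩ := Finset.nonempty_of_ne_empty hne
  exact h (nR_of_mem_Qset hf hq)

lemma Qn_t12 {f : Fin 4 → ZMod p} {u v A B C : ZMod p} (hnz : ¬(u = 0 ∧ v = 0))
    (hirr : ∀ x y : ZMod p, ¬(x = 0 ∧ y = 0) → A * x ^ 2 + B * x * y + C * y ^ 2 ≠ 0)
    (hfac : f = linQuadProd u v A B C) : Qn f = 1 := by
  have hA : A ≠ 0 := by
    intro hA; apply hirr 1 0 (by simp); rw [hA]; ring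
  have hf : f ≠ 0 := hfac ▸ lqp_nz hnz hirr
  have hmono : ∀ x y : ZMod p, ¬(x = 0 ∧ y = 0) →
      1 * x ^ 2 + (A⁻¹ * B) * x * y + (A⁻¹ * C) * y ^ 2 ≠ 0 := by
    intro x y hxy hz
    apply hirr x y hxy
    have : A * (1 * x ^ 2 + (A⁻¹ * B) * x * y + (A⁻¹ * C) * y ^ 2)
        = A * x ^ 2 + B * x * y + C * y ^ 2 := by
      field_simp
    rw [← this, hz, mul_zero]
  have hrep : f = linQuadProd (A * u) (A * v) 1 (A⁻¹ * B) (A⁻¹ * C) := by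
    rw [lqp_smul]
    rw [hfac]
    congr 1 <;> field_simp
  have hQ : Qset f = {(A⁻¹ * B, A⁻¹ * C)} := by
    ext q
    simp only [Qset, Finset.mem_filter, Finset.mem_univ, true_and, Finset.mem_singleton]
    constructor
    · rintro ⟨hirr', u', v', hfac'⟩
      have hnz' : ¬(u' = 0 ∧ v' = 0) := by
        rintro ⟨rfl, rfl⟩
        exact hf (hfac'.trans (lqp_zero' _ _ _))
      have hroots : prt u' v' = prt u v := by
        have r1 : ∀ o, ocond f o ↔ o = prt u v := by
          intro o
          rw [hfac, ocond_linQuadProd hirr, lroot_iff hnz]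
        have r2 : ∀ o, ocond f o ↔ o = prt u' v' := by
          intro o
          rw [hfac', ocond_linQuadProd hirr', lroot_iff hnz']
        exact ((r2 (prt u' v')).mpr rfl |> (r1 (prt u' v')).mp)
      obtain ⟨a, ha, hu', hv'⟩ := lin_prop hnz hnz' (by
        have := prt_eq_det hroots.symm
        linear_combination this)
      rw [hu', hv', lqp_smul] at hfac'
      rw [hfac] at hfac'
      obtain ⟨e1, e2, e3⟩ := lqp_cancel hnz hfac'
      have haA : A = a := by rw [e1, mul_one]
      have hq1 : q.1 = A⁻¹ * B := by
        rw [e2, haA, inv_mul_cancel_left₀ (haA ▸ hA)]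
      have hq2 : q.2 = A⁻¹ * C := by
        rw [e3, haA, inv_mul_cancel_left₀ (haA ▸ hA)]
      exact Prod.ext hq1 hq2
    · rintro rfl
      exact ⟨hmono, A * u, A * v, hrep⟩
  unfold Qn
  rw [hQ, Finset.card_singleton]

lemma Qn_t13 {f : Fin 4 → ZMod p} {c u v : ZMod p} (hc : c ≠ 0) (hnz : ¬(u = 0 ∧ v = 0))
    (hfac : f = fun i => c * linProd u v u v u v i) : Qn f = 0 := by
  have hf : f ≠ 0 := hfac ▸ cube_nz hc hnz
  unfold Qn
  rw [Finset.card_eq_zero]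
  rw [Finset.eq_empty_iff_forall_notMem]
  intro q hq
  rw [Qset, Finset.mem_filter] at hq
  obtain ⟨-, hirr', u', v', hfac'⟩ := hq
  have hnz' : ¬(u' = 0 ∧ v' = 0) := by
    rintro ⟨rfl, rfl⟩
    exact hf (hfac'.trans (lqp_zero' _ _ _))
  have hroots : prt u' v' = prt u v := by
    have r1 : ∀ o, ocond f o ↔ o = prt u v := by
      intro o
      rw [hfac, ocond_cube hc, lroot_iff hnz]
    have r2 : ∀ o, ocond f o ↔ o = prt u' v' := by
      intro o
      rw [hfac', ocond_linQuadProd hirr', lroot_iff hnz']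
    exact ((r2 (prt u' v')).mpr rfl |> (r1 (prt u' v')).mp)
  obtain ⟨a, ha, hu', hv'⟩ := lin_prop hnz hnz' (by
    have := prt_eq_det hroots.symm
    linear_combination this)
  rw [hu', hv', lqp_smul] at hfac'
  rw [hfac, cube_as_lqp] at hfac'
  obtain ⟨e1, e2, e3⟩ := lqp_cancel hnz hfac'
  -- a = c u², a q.1 = 2cuv, a q.2 = c v² ; contradiction with irreducibility at (v, -u)
  apply hirr' v (-u) (by
    rintro ⟨hv0, hu0⟩
    exact hnz ⟨neg_eq_zero.mp hu0, hv0⟩)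
  have key : a * (1 * v ^ 2 + q.1 * v * (-u) + q.2 * (-u) ^ 2) = 0 := by
    have e2' : a * q.1 = c * (u * v + v * u) := by rw [← e2]
    have e3' : a * q.2 = c * (v * v) := by rw [← e3]
    have e1' : a * 1 = c * (u * u) := by rw [← e1]
    linear_combination (v ^ 2) * e1' - (u * v) * e2' + (u ^ 2) * e3'
  rcases mul_eq_zero.mp key with h | h
  · exact absurd h ha
  · exact h

end BCF

namespace BCF
variable {p : ℕ} [Fact p.Prime]

lemma master {f : Fin 4 → ZMod p} (hf : f ≠ 0) :
    lamFp f = (nR f : ℂ) - 1 ∧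
    2 * lamFpSq f - (lamFp f) ^ 2 = (nR f : ℂ) + 2 * (Qn f : ℂ) - 1 := by
  by_cases h3 : HasFpType f FpType.t3
  · have hn : nR f = 0 := t3_nR h3
    have h111 : ¬ HasFpType f FpType.t111 := fun h => by have := nR_t111 h; omega
    have h12 : ¬ HasFpType f FpType.t12 := fun h => by have := nR_t12 h; omega
    have h121 : ¬ HasFpType f FpType.t121 := fun h => by have := nR_t121 h; omega
    have hQ : Qn f = 0 := Qn_zero_of_nR hf (by omega)
    have hl : lamFp f = -1 := by unfold lamFp; rw [if_neg h111, if_pos h3]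
    have hlq : lamFpSq f = 0 := by unfold lamFpSq; rw [if_neg h111, if_neg h12, if_neg h121]
    rw [hl, hlq, hn, hQ]
    push_cast
    norm_num
  · obtain ⟨u₀, v₀, A, B, C, hnz₀, hfac⟩ :
        ∃ u₀ v₀ A B C : ZMod p, ¬(u₀ = 0 ∧ v₀ = 0) ∧ f = linQuadProd u₀ v₀ A B C := by
      have hco : ∃ o, ocond f o := by
        by_contra hno
        push_neg at hno
        exact h3 (nR0_t3 (nR_eq_zero hno))
      obtain ⟨o, ho⟩ := hco
      cases o with
      | some t => exact ⟨1, -t, f 0, f 1 + t * f 0, f 2 + t * f 1 + t ^ 2 * f 0, by simp, fac_some ho⟩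
      | none => exact ⟨0, 1, f 1, f 2, f 3, by simp, fac_none ho⟩
    by_cases hirr : ∀ x y : ZMod p, ¬(x = 0 ∧ y = 0) → A * x ^ 2 + B * x * y + C * y ^ 2 ≠ 0
    · have h12 : HasFpType f FpType.t12 := ⟨u₀, v₀, A, B, C, hnz₀, hirr, hfac⟩
      have hn : nR f = 1 := nR_t12 h12
      have hQ : Qn f = 1 := Qn_t12 hnz₀ hirr hfac
      have h111 : ¬ HasFpType f FpType.t111 := fun h => by have := nR_t111 h; omega
      have h121 : ¬ HasFpType f FpType.t121 := fun h => by have := nR_t121 h; omega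
      have hl : lamFp f = 0 := by unfold lamFp; rw [if_neg h111, if_neg h3, if_neg h121]
      have hlq : lamFpSq f = 1 := by unfold lamFpSq; rw [if_neg h111, if_pos h12]
      rw [hl, hlq, hn, hQ]
      push_cast
      norm_num
    · push_neg at hirr
      obtain ⟨x, y, hxy, hval⟩ := hirr
      obtain ⟨u₁, v₁, u₂, v₂, hnz₁, hnz₂, hf3⟩ :
          ∃ u₁ v₁ u₂ v₂ : ZMod p, ¬(u₁ = 0 ∧ v₁ = 0) ∧ ¬(u₂ = 0 ∧ v₂ = 0) ∧
            f = linProd u₀ v₀ u₁ v₁ u₂ v₂ := by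
        by_cases hy : y = 0
        · have hx : x ≠ 0 := fun hx0 => hxy hx0 hy
          have hA : A = 0 := by
            subst hy
            have h2 : A * x ^ 2 = 0 := by linear_combination hval
            rcases mul_eq_zero.mp h2 with h | h
            · exact h
            · exact absurd h (pow_ne_zero 2 hx)
          refine ⟨0, 1, B, C, by simp, ?_, ?_⟩
          · rintro ⟨hB, hC⟩
            apply hf
            rw [hfac, hA, hB, hC, lqp_zero]
          · rw [hfac, quad_A0_factor hA]
        · have hs : A * (x * y⁻¹) ^ 2 + B * (x * y⁻¹) + C = 0 := by
            have h2 : y ^ 2 ≠ 0 := pow_ne_zero 2 hy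
            field_simp
            linear_combination hval
          refine ⟨1, -(x * y⁻¹), A, B + (x * y⁻¹) * A, by simp, ?_, ?_⟩
          · rintro ⟨hA, hBs⟩
            have hB : B = 0 := by rw [hA] at hBs; linear_combination hBs
            have hC : C = 0 := by rw [hA, hB] at hs; linear_combination hs
            apply hf
            rw [hfac, hA, hB, hC, lqp_zero]
          · rw [hfac, quad_root_factor hs]
      clear hval hxy hfac
      by_cases h01 : u₀ * v₁ - u₁ * v₀ = 0 <;>
        by_cases h02 : u₀ * v₂ - u₂ * v₀ = 0 <;>
          by_cases h12d : u₁ * v₂ - u₂ * v₁ = 0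
      -- TTT : t13
      · obtain ⟨a, ha, hau, hav⟩ := lin_prop hnz₀ hnz₁ h01
        obtain ⟨b, hb, hbu, hbv⟩ := lin_prop hnz₀ hnz₂ h02
        have hcube : f = fun i => (a * b) * linProd u₀ v₀ u₀ v₀ u₀ v₀ i := by
          rw [hf3, hau, hav, hbu, hbv, lp_cube]
        have hab : a * b ≠ 0 := mul_ne_zero ha hb
        have h13 : HasFpType f FpType.t13 := ⟨u₀, v₀, a * b, hab, hnz₀, hcube⟩
        have hn : nR f = 1 := nR_t13 h13
        have hQ : Qn f = 0 := Qn_t13 hab hnz₀ hcube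
        have h111 : ¬ HasFpType f FpType.t111 := fun h => by have := nR_t111 h; omega
        have h121 : ¬ HasFpType f FpType.t121 := fun h => by have := nR_t121 h; omega
        have h12 : ¬ HasFpType f FpType.t12 := by
          intro h
          obtain ⟨u', v', A', B', C', hnz', hirr', hfac'⟩ := h
          have := Qn_t12 hnz' hirr' hfac'
          omega
        have hl : lamFp f = 0 := by unfold lamFp; rw [if_neg h111, if_neg h3, if_neg h121]
        have hlq : lamFpSq f = 0 := by unfold lamFpSq; rw [if_neg h111, if_neg h12, if_neg h121]
        rw [hl, hlq, hn, hQ]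
        push_cast
        norm_num
      -- TTF : absurd
      · obtain ⟨a, ha, hau, hav⟩ := lin_prop hnz₀ hnz₁ h01
        obtain ⟨b, hb, hbu, hbv⟩ := lin_prop hnz₀ hnz₂ h02
        exact absurd (by rw [hau, hav, hbu, hbv]; ring) h12d
      -- TFT : absurd
      · obtain ⟨a, ha, hau, hav⟩ := lin_prop hnz₀ hnz₁ h01
        obtain ⟨b, hb, hbu, hbv⟩ := lin_prop hnz₁ hnz₂ h12d
        exact absurd (by rw [hbu, hbv, hau, hav]; ring) h02
      -- TFF : t121 (repeated ℓ₀, third aℓ₂? no: ℓ₁ = aℓ₀)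
      · obtain ⟨a, ha, hau, hav⟩ := lin_prop hnz₀ hnz₁ h01
        have hrep : f = linProd u₀ v₀ u₀ v₀ (a * u₂) (a * v₂) := by
          rw [hf3, hau, hav, lp_move]
        have hdet : u₀ * (a * v₂) - (a * u₂) * v₀ ≠ 0 := by
          intro h
          apply h02
          have h2 : a * (u₀ * v₂ - u₂ * v₀) = 0 := by linear_combination h
          rcases mul_eq_zero.mp h2 with h' | h'
          · exact absurd h' ha
          · exact h'
        have h121 : HasFpType f FpType.t121 := ⟨u₀, v₀, a * u₂, a * v₂, hdet, hrep⟩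
        have hn : nR f = 2 := nR_t121 h121
        have hQ : Qn f = 0 := Qn_zero_of_nR hf (by omega)
        have h111 : ¬ HasFpType f FpType.t111 := fun h => by have := nR_t111 h; omega
        have h12 : ¬ HasFpType f FpType.t12 := fun h => by have := nR_t12 h; omega
        have hl : lamFp f = 1 := by unfold lamFp; rw [if_neg h111, if_neg h3, if_pos h121]
        have hlq : lamFpSq f = 1 := by unfold lamFpSq; rw [if_neg h111, if_neg h12, if_pos h121]
        rw [hl, hlq, hn, hQ]
        push_cast
        norm_num
      -- FTT : absurd
      · obtain ⟨b, hb, hbu, hbv⟩ := lin_prop hnz₁ hnz₂ h12d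
        rw [hbu, hbv] at h02
        have key : b * (u₀ * v₁ - u₁ * v₀) = 0 := by linear_combination h02
        rcases mul_eq_zero.mp key with h | h
        · exact absurd h hb
        · exact absurd h h01
      -- FTF : t121 (ℓ₂ = aℓ₀)
      · obtain ⟨a, ha, hau, hav⟩ := lin_prop hnz₀ hnz₂ h02
        have hrep : f = linProd u₀ v₀ u₀ v₀ (a * u₁) (a * v₁) := by
          rw [hf3, lp_swap23, hau, hav, lp_move]
        have hdet : u₀ * (a * v₁) - (a * u₁) * v₀ ≠ 0 := by
          intro h
          apply h01
          have h2 : a * (u₀ * v₁ - u₁ * v₀) = 0 := by linear_combination h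
          rcases mul_eq_zero.mp h2 with h' | h'
          · exact absurd h' ha
          · exact h'
        have h121 : HasFpType f FpType.t121 := ⟨u₀, v₀, a * u₁, a * v₁, hdet, hrep⟩
        have hn : nR f = 2 := nR_t121 h121
        have hQ : Qn f = 0 := Qn_zero_of_nR hf (by omega)
        have h111 : ¬ HasFpType f FpType.t111 := fun h => by have := nR_t111 h; omega
        have h12 : ¬ HasFpType f FpType.t12 := fun h => by have := nR_t12 h; omega
        have hl : lamFp f = 1 := by unfold lamFp; rw [if_neg h111, if_neg h3, if_pos h121]
        have hlq : lamFpSq f = 1 := by unfold lamFpSq; rw [if_neg h111, if_neg h12, if_pos h121]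
        rw [hl, hlq, hn, hQ]
        push_cast
        norm_num
      -- FFT : t121 (ℓ₂ = aℓ₁)
      · obtain ⟨a, ha, hau, hav⟩ := lin_prop hnz₁ hnz₂ h12d
        have hrep : f = linProd u₁ v₁ u₁ v₁ (a * u₀) (a * v₀) := by
          rw [hf3, lp_swap12, lp_swap23, hau, hav, lp_move]
        have hdet : u₁ * (a * v₀) - (a * u₀) * v₁ ≠ 0 := by
          intro h
          apply h01
          have h2 : a * (u₀ * v₁ - u₁ * v₀) = 0 := by linear_combination -h
          rcases mul_eq_zero.mp h2 with h' | h'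
          · exact absurd h' ha
          · exact h'
        have h121 : HasFpType f FpType.t121 := ⟨u₁, v₁, a * u₀, a * v₀, hdet, hrep⟩
        have hn : nR f = 2 := nR_t121 h121
        have hQ : Qn f = 0 := Qn_zero_of_nR hf (by omega)
        have h111 : ¬ HasFpType f FpType.t111 := fun h => by have := nR_t111 h; omega
        have h12 : ¬ HasFpType f FpType.t12 := fun h => by have := nR_t12 h; omega
        have hl : lamFp f = 1 := by unfold lamFp; rw [if_neg h111, if_neg h3, if_pos h121]
        have hlq : lamFpSq f = 1 := by unfold lamFpSq; rw [if_neg h111, if_neg h12, if_pos h121]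
        rw [hl, hlq, hn, hQ]
        push_cast
        norm_num
      -- FFF : t111
      · have h111 : HasFpType f FpType.t111 := ⟨u₀, v₀, u₁, v₁, u₂, v₂, h01, h02, h12d, hf3⟩
        have hn : nR f = 3 := nR_t111 h111
        have hQ : Qn f = 0 := Qn_zero_of_nR hf (by omega)
        have hl : lamFp f = 2 := by unfold lamFp; rw [if_pos h111]
        have hlq : lamFpSq f = 3 := by unfold lamFpSq; rw [if_pos h111]
        rw [hl, hlq, hn, hQ]
        push_cast
        norm_num

end BCF

namespace BCF
variable {p : ℕ} [Fact p.Prime]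

def irredSet (p : ℕ) [Fact p.Prime] : Finset (ZMod p × ZMod p) :=
  Finset.univ.filter fun q =>
    ∀ x y : ZMod p, ¬(x = 0 ∧ y = 0) → 1 * x ^ 2 + q.1 * x * y + q.2 * y ^ 2 ≠ 0

lemma irr_iff (B C : ZMod p) :
    (∀ x y : ZMod p, ¬(x = 0 ∧ y = 0) → 1 * x ^ 2 + B * x * y + C * y ^ 2 ≠ 0)
      ↔ ∀ s : ZMod p, s ^ 2 + B * s + C ≠ 0 := by
  constructor
  · intro h s hs
    apply h s 1 (by simp)
    linear_combination hs
  · intro h x y hxy hz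
    by_cases hy : y = 0
    · have hx : x ≠ 0 := fun hx => hxy ⟨hx, hy⟩
      subst hy
      have h2 : x ^ 2 = 0 := by linear_combination hz
      exact hx (sq_eq_zero_iff.mp h2)
    · apply h (x * y⁻¹)
      have hval : (x * y⁻¹) ^ 2 + B * (x * y⁻¹) + C
          = (1 * x ^ 2 + B * x * y + C * y ^ 2) * (y⁻¹) ^ 2 := by
        field_simp
      rw [hval, hz, zero_mul]

def sym2map (p : ℕ) [Fact p.Prime] : Sym2 (ZMod p) → ZMod p × ZMod p :=
  Sym2.lift ⟨fun r s => (-(r + s), r * s), by intro r s; simp [add_comm, mul_comm]⟩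

lemma sym2map_mk (r s : ZMod p) : sym2map p s(r, s) = (-(r + s), r * s) := rfl

lemma sym2map_inj : Function.Injective (sym2map p) := by
  intro z w h
  induction z using Sym2.ind with
  | _ r s =>
    induction w using Sym2.ind with
    | _ r' s' =>
      rw [sym2map_mk, sym2map_mk, Prod.mk.injEq] at h
      obtain ⟨h1, h2⟩ := h
      have h1' : r + s = r' + s' := neg_injective h1
      have key : (r' - r) * (r' - s) = 0 := by
        linear_combination (-r') * h1' + h2
      rw [Sym2.eq_iff]
      rcases mul_eq_zero.mp key with hk | hk
      · left
        exact ⟨by linear_combination -hk, by linear_combination h1' + hk⟩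
      · right
        exact ⟨by linear_combination h1' + hk, by linear_combination -hk⟩

lemma mem_image_iff (q : ZMod p × ZMod p) :
    q ∈ Finset.univ.image (sym2map p) ↔ ∃ s : ZMod p, s ^ 2 + q.1 * s + q.2 = 0 := by
  simp only [Finset.mem_image, Finset.mem_univ, true_and]
  constructor
  · rintro ⟨z, hz⟩
    induction z using Sym2.ind with
    | _ r s =>
      rw [sym2map_mk] at hz
      have h1 : -(r + s) = q.1 := congrArg Prod.fst hz
      have h2 : r * s = q.2 := congrArg Prod.snd hz
      exact ⟨r, by linear_combination (-r) * h1 - h2⟩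
  · rintro ⟨s, hs⟩
    refine ⟨s(s, -q.1 - s), ?_⟩
    rw [sym2map_mk]
    have e1 : -(s + (-q.1 - s)) = q.1 := by ring
    have e2 : s * (-q.1 - s) = q.2 := by linear_combination -hs
    rw [e1, e2]

lemma irredSet_eq : irredSet p = Finset.univ \ Finset.univ.image (sym2map p) := by
  ext q
  simp only [irredSet, Finset.mem_filter, Finset.mem_univ, true_and, Finset.mem_sdiff,
    mem_image_iff, irr_iff, not_exists]

lemma card_irred_complex : (2 : ℂ) * ((irredSet p).card : ℂ) = (p : ℂ) ^ 2 - p := by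
  have hchoose : 2 * Nat.choose (p + 1) 2 = p ^ 2 + p := by
    rw [Nat.choose_two_right]
    have heven : 2 ∣ (p + 1) * p := by
      rcases Nat.even_or_odd p with h | h
      · exact Dvd.dvd.mul_left h.two_dvd _
      · exact Dvd.dvd.mul_right (Odd.add_one h).two_dvd _
    rw [Nat.add_sub_cancel, Nat.mul_div_cancel' heven]
    ring
  have hcr : (Finset.univ.image (sym2map p)).card = Nat.choose (p + 1) 2 := by
    rw [Finset.card_image_of_injective _ sym2map_inj, Finset.card_univ, Sym2.card,
      ZMod.card]
  have hle : (Finset.univ.image (sym2map p)).card ≤ p ^ 2 := by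
    have := Finset.card_le_card (Finset.subset_univ (Finset.univ.image (sym2map p)))
    rwa [Finset.card_univ, Fintype.card_prod, ZMod.card, ← pow_two] at this
  have hci : (irredSet p).card = p ^ 2 - (Finset.univ.image (sym2map p)).card := by
    rw [irredSet_eq, Finset.card_sdiff_of_subset (Finset.subset_univ _), Finset.card_univ,
      Fintype.card_prod, ZMod.card, ← pow_two]
  have hcast : ((irredSet p).card : ℂ)
      = (p : ℂ) ^ 2 - ((Finset.univ.image (sym2map p)).card : ℂ) := by
    rw [hci, Nat.cast_sub hle]
    push_cast
    ring
  have h2cr : (2 : ℂ) * ((Finset.univ.image (sym2map p)).card : ℂ) = (p : ℂ) ^ 2 + p := by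
    rw [hcr]
    exact_mod_cast congrArg (Nat.cast : ℕ → ℂ) hchoose
  rw [hcast]
  linear_combination -h2cr

end BCF

namespace BCF
variable {p : ℕ} [Fact p.Prime]

def Ccond (g : Fin 4 → ZMod p) : Option (ZMod p) → Prop
  | some t => g 1 = -(t * g 0) ∧ g 2 = t ^ 2 * g 0 ∧ g 3 = -(t ^ 3 * g 0)
  | none => g 0 = 0 ∧ g 1 = 0 ∧ g 2 = 0

def cnt (g : Fin 4 → ZMod p) : ℕ := (Finset.univ.filter (fun o => Ccond g o)).card

lemma nR_cast (f : Fin 4 → ZMod p) :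
    (nR f : ℂ) = ∑ o : Option (ZMod p), (if ocond f o then (1 : ℂ) else 0) := by
  unfold nR
  rw [Finset.sum_boole]

lemma cnt_cast (g : Fin 4 → ZMod p) :
    (cnt g : ℂ) = ∑ o : Option (ZMod p), (if Ccond g o then (1 : ℂ) else 0) := by
  unfold cnt
  rw [Finset.sum_boole]

lemma sum_psi_nR (g : Fin 4 → ZMod p) :
    ∑ f : Fin 4 → ZMod p, psi p (bcfPair f g) * (nR f : ℂ)
      = (p : ℂ) ^ 3 * (cnt g : ℂ) := by
  have step : ∀ f : Fin 4 → ZMod p, psi p (bcfPair f g) * (nR f : ℂ)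
      = ∑ o : Option (ZMod p), (if ocond f o then psi p (bcfPair f g) else 0) := by
    intro f
    rw [nR_cast, Finset.mul_sum]
    refine Finset.sum_congr rfl fun o _ => ?_
    split_ifs <;> simp
  rw [Finset.sum_congr rfl fun f _ => step f, Finset.sum_comm]
  have inner : ∀ o : Option (ZMod p),
      (∑ f : Fin 4 → ZMod p, if ocond f o then psi p (bcfPair f g) else 0)
        = if Ccond g o then (p : ℂ) ^ 3 else 0 := by
    intro o
    cases o with
    | some t =>
      calc (∑ f : Fin 4 → ZMod p, if ocond f (some t) then psi p (bcfPair f g) else 0)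
          = ∑ f : Fin 4 → ZMod p, if rt f t = 0 then psi p (bcfPair f g) else 0 :=
            Finset.sum_congr rfl fun f _ => by
              by_cases h : rt f t = 0 <;> simp [ocond, h]
        _ = if (g 1 = -(t * g 0) ∧ g 2 = t ^ 2 * g 0 ∧ g 3 = -(t ^ 3 * g 0))
              then (p : ℂ) ^ 3 else 0 := sum_root_some g t
        _ = if Ccond g (some t) then (p : ℂ) ^ 3 else 0 := by
            by_cases h : (g 1 = -(t * g 0) ∧ g 2 = t ^ 2 * g 0 ∧ g 3 = -(t ^ 3 * g 0)) <;>
              simp [Ccond, h]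
    | none =>
      calc (∑ f : Fin 4 → ZMod p, if ocond f none then psi p (bcfPair f g) else 0)
          = ∑ f : Fin 4 → ZMod p, if f 0 = 0 then psi p (bcfPair f g) else 0 :=
            Finset.sum_congr rfl fun f _ => by
              by_cases h : f 0 = 0 <;> simp [ocond, h]
        _ = if (g 0 = 0 ∧ g 1 = 0 ∧ g 2 = 0) then (p : ℂ) ^ 3 else 0 := sum_root_none g
        _ = if Ccond g none then (p : ℂ) ^ 3 else 0 := by
            by_cases h : (g 0 = 0 ∧ g 1 = 0 ∧ g 2 = 0) <;> simp [Ccond, h]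
  rw [Finset.sum_congr rfl fun o _ => inner o, cnt_cast, Finset.mul_sum]
  refine Finset.sum_congr rfl fun o _ => ?_
  split_ifs <;> simp

lemma bcfPair_zero_left (g : Fin 4 → ZMod p) : bcfPair 0 g = 0 := by
  show (0 : ZMod p) * g 0 - 0 * g 1 + 0 * g 2 - 0 * g 3 = 0
  ring

lemma bcfPair_zero_right (f : Fin 4 → ZMod p) : bcfPair f 0 = 0 := by
  show f 3 * 0 - f 2 * 0 + f 1 * 0 - f 0 * 0 = 0
  ring

lemma lamFp_eq (f : Fin 4 → ZMod p) :
    lamFp f = (nR f : ℂ) - 1 - (p : ℂ) * (if f = 0 then 1 else 0) := by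
  by_cases hf : f = 0
  · subst hf
    rw [lamFp_zero, if_pos rfl, nR_zero_form]
    push_cast
    ring
  · rw [if_neg hf, (master hf).1]
    ring

lemma fourier_lam_sum (g : Fin 4 → ZMod p) :
    ∑ f : Fin 4 → ZMod p, psi p (bcfPair f g) * lamFp f
      = (p : ℂ) ^ 3 * (cnt g : ℂ) - (if g = 0 then (p : ℂ) ^ 4 else 0) - p := by
  have step : ∀ f : Fin 4 → ZMod p, psi p (bcfPair f g) * lamFp f
      = psi p (bcfPair f g) * (nR f : ℂ) - psi p (bcfPair f g)
        - (p : ℂ) * (if f = 0 then psi p (bcfPair f g) else 0) := by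
    intro f
    rw [lamFp_eq]
    split_ifs <;> ring
  rw [Finset.sum_congr rfl fun f _ => step f, Finset.sum_sub_distrib, Finset.sum_sub_distrib,
    sum_psi_nR, sum_psi_pair, ← Finset.mul_sum,
    Finset.sum_ite_eq' Finset.univ (0 : Fin 4 → ZMod p) (fun f => psi p (bcfPair f g)),
    if_pos (Finset.mem_univ _), bcfPair_zero_left, psi_zero, mul_one]

/-! ### sums for the second part -/

lemma psi_pair_zero (f : Fin 4 → ZMod p) : psi p (bcfPair f 0) = 1 := by
  rw [bcfPair_zero_right, psi_zero]

lemma Ccond_zero (o : Option (ZMod p)) : Ccond (0 : Fin 4 → ZMod p) o := by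
  cases o with
  | some t =>
    refine ⟨?_, ?_, ?_⟩ <;> · show (0 : ZMod p) = _; simp
  | none => exact ⟨rfl, rfl, rfl⟩

lemma cnt_zero : cnt (0 : Fin 4 → ZMod p) = p + 1 := by
  unfold cnt
  rw [Finset.filter_true_of_mem fun o _ => Ccond_zero o, Finset.card_univ,
    Fintype.card_option, ZMod.card]

lemma sum_nR : ∑ f : Fin 4 → ZMod p, (nR f : ℂ) = ((p : ℂ) + 1) * (p : ℂ) ^ 3 := by
  have h := sum_psi_nR (0 : Fin 4 → ZMod p)
  rw [Finset.sum_congr rfl fun f _ => by rw [psi_pair_zero f, one_mul]] at h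
  rw [h, cnt_zero]
  push_cast
  ring

lemma Qn_zero_form : Qn (0 : Fin 4 → ZMod p) = (irredSet p).card := by
  unfold Qn
  congr 1
  ext q
  simp only [Qset, irredSet, Finset.mem_filter, Finset.mem_univ, true_and,
    and_iff_left_iff_imp]
  intro _
  exact ⟨0, 0, (lqp_zero' _ _ _).symm⟩

lemma sum_Qn : ∑ f : Fin 4 → ZMod p, (Qn f : ℂ) = ((irredSet p).card : ℂ) * (p : ℂ) ^ 2 := by
  have step : ∀ f : Fin 4 → ZMod p, (Qn f : ℂ)
      = ∑ q : ZMod p × ZMod p, (if ((∀ x y : ZMod p, ¬(x = 0 ∧ y = 0) →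
          1 * x ^ 2 + q.1 * x * y + q.2 * y ^ 2 ≠ 0) ∧
          ∃ u v : ZMod p, f = linQuadProd u v 1 q.1 q.2) then (1 : ℂ) else 0) := by
    intro f
    unfold Qn Qset
    rw [Finset.sum_boole]
  rw [Finset.sum_congr rfl fun f _ => step f, Finset.sum_comm]
  have inner : ∀ q : ZMod p × ZMod p,
      (∑ f : Fin 4 → ZMod p, if ((∀ x y : ZMod p, ¬(x = 0 ∧ y = 0) →
          1 * x ^ 2 + q.1 * x * y + q.2 * y ^ 2 ≠ 0) ∧
          ∃ u v : ZMod p, f = linQuadProd u v 1 q.1 q.2) then (1 : ℂ) else 0)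
        = if q ∈ irredSet p then ((p : ℂ) ^ 2) else 0 := by
    intro q
    by_cases hq : ∀ x y : ZMod p, ¬(x = 0 ∧ y = 0) →
        1 * x ^ 2 + q.1 * x * y + q.2 * y ^ 2 ≠ 0
    · rw [if_pos (by rw [irredSet, Finset.mem_filter]; exact ⟨Finset.mem_univ _, hq⟩)]
      have e1 : ∀ f : Fin 4 → ZMod p,
          (if ((∀ x y : ZMod p, ¬(x = 0 ∧ y = 0) →
            1 * x ^ 2 + q.1 * x * y + q.2 * y ^ 2 ≠ 0) ∧
            ∃ u v : ZMod p, f = linQuadProd u v 1 q.1 q.2) then (1 : ℂ) else 0)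
          = (if (∃ u v : ZMod p, f = linQuadProd u v 1 q.1 q.2) then (1 : ℂ) else 0) := by
        intro f
        exact if_congr (and_iff_right hq) rfl rfl
      rw [Finset.sum_congr rfl fun f _ => e1 f, Finset.sum_boole]
      have himg : Finset.univ.filter
          (fun f : Fin 4 → ZMod p => ∃ u v : ZMod p, f = linQuadProd u v 1 q.1 q.2)
          = Finset.univ.image (fun uv : ZMod p × ZMod p => linQuadProd uv.1 uv.2 1 q.1 q.2) := by
        ext f
        simp only [Finset.mem_filter, Finset.mem_univ, true_and, Finset.mem_image]
        constructor
        · rintro ⟨u, v, rfl⟩; exact ⟨(u, v), rfl⟩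
        · rintro ⟨⟨u, v⟩, rfl⟩; exact ⟨u, v, rfl⟩
      have hinj : Function.Injective
          (fun uv : ZMod p × ZMod p => linQuadProd uv.1 uv.2 1 q.1 q.2) := by
        rintro ⟨u, v⟩ ⟨u', v'⟩ h
        have h' : linQuadProd u v 1 q.1 q.2 = linQuadProd u' v' 1 q.1 q.2 := h
        have h0 := congrFun h' 0
        have h1 := congrFun h' 1
        rw [lqp0, lqp0] at h0
        rw [lqp1, lqp1] at h1
        simp only [mul_one] at h0
        subst h0
        have hv : v = v' := by linear_combination h1
        rw [hv]
      rw [himg, Finset.card_image_of_injective _ hinj, Finset.card_univ, Fintype.card_prod,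
        ZMod.card]
      push_cast
      ring
    · rw [if_neg (by rw [irredSet, Finset.mem_filter]; rintro ⟨-, hmem⟩; exact hq hmem)]
      rw [Finset.sum_congr rfl fun f _ => if_neg (fun hc => hq hc.1), Finset.sum_const_zero]
  rw [Finset.sum_congr rfl fun q _ => inner q, ← Finset.sum_filter, Finset.sum_const]
  have huniv : Finset.univ.filter (fun q => q ∈ irredSet p) = irredSet p := by
    ext q; simp
  rw [huniv, nsmul_eq_mul]

lemma theta_sum :
    ∑ f : Fin 4 → ZMod p, (2 * lamFpSq f - (lamFp f) ^ 2)
      = (p : ℂ) ^ 4 - (p : ℂ) ^ 2 := by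
  have hpt : ∀ f : Fin 4 → ZMod p, 2 * lamFpSq f - (lamFp f) ^ 2
      = ((nR f : ℂ) + 2 * (Qn f : ℂ) - 1)
        - (if f = 0 then ((nR (0 : Fin 4 → ZMod p) : ℂ)
            + 2 * (Qn (0 : Fin 4 → ZMod p) : ℂ) - 1) else 0) := by
    intro f
    by_cases hf : f = 0
    · subst hf
      rw [if_pos rfl, lamFp_zero, lamFpSq_zero]
      ring
    · rw [if_neg hf, (master hf).2]
      ring
  rw [Finset.sum_congr rfl fun f _ => hpt f, Finset.sum_sub_distrib]
  rw [Finset.sum_ite_eq' Finset.univ (0 : Fin 4 → ZMod p)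
    (fun _ => ((nR (0 : Fin 4 → ZMod p) : ℂ) + 2 * (Qn (0 : Fin 4 → ZMod p) : ℂ) - 1)),
    if_pos (Finset.mem_univ _)]
  have hsplit : ∑ f : Fin 4 → ZMod p, ((nR f : ℂ) + 2 * (Qn f : ℂ) - 1)
      = (∑ f : Fin 4 → ZMod p, (nR f : ℂ)) + 2 * (∑ f : Fin 4 → ZMod p, (Qn f : ℂ))
        - (Fintype.card (Fin 4 → ZMod p) : ℂ) := by
    rw [Finset.sum_sub_distrib, Finset.sum_add_distrib, Finset.sum_const, Finset.card_univ,
      nsmul_eq_mul, mul_one, ← Finset.mul_sum]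
  rw [hsplit, sum_nR, sum_Qn, nR_zero_form, Qn_zero_form]
  have hcard : (Fintype.card (Fin 4 → ZMod p) : ℂ) = (p : ℂ) ^ 4 := by
    rw [Fintype.card_fun, ZMod.card, Fintype.card_fin]
    push_cast
    ring
  rw [hcard]
  push_cast
  linear_combination ((p : ℂ) ^ 2 - 1) * card_irred_complex (p := p)

end BCF

namespace BCF
variable {p : ℕ} [Fact p.Prime]

lemma three_ne (hp3 : p ≠ 3) : (3 : ZMod p) ≠ 0 := by
  intro h
  have h3 : ((3 : ℕ) : ZMod p) = 0 := by exact_mod_cast h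
  have hdvd : p ∣ 3 := (ZMod.natCast_eq_zero_iff 3 p).mp h3
  rcases (Nat.prime_three).eq_one_or_self_of_dvd p hdvd with h1 | h1
  · exact (Fact.out : p.Prime).one_lt.ne' h1
  · exact hp3 h1

lemma G0 (g : Fin 4 → ZMod p) : ![g 0, 3 * g 1, 3 * g 2, g 3] 0 = g 0 := rfl
lemma G1 (g : Fin 4 → ZMod p) : ![g 0, 3 * g 1, 3 * g 2, g 3] 1 = 3 * g 1 := rfl
lemma G2 (g : Fin 4 → ZMod p) : ![g 0, 3 * g 1, 3 * g 2, g 3] 2 = 3 * g 2 := rfl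
lemma G3 (g : Fin 4 → ZMod p) : ![g 0, 3 * g 1, 3 * g 2, g 3] 3 = g 3 := rfl

lemma Gzero {g : Fin 4 → ZMod p} (hg : g = 0) :
    ![g 0, 3 * g 1, 3 * g 2, g 3] = (0 : Fin 4 → ZMod p) := by
  subst hg
  refine funext4 ?_ ?_ ?_ ?_ <;> simp [G0, G1, G2, G3]

lemma cube_eval {g : Fin 4 → ZMod p} {t : ZMod p} (hc : Ccond g (some t)) (x y : ZMod p) :
    bcfEval ![g 0, 3 * g 1, 3 * g 2, g 3] x y = g 0 * (x - t * y) ^ 3 := by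
  obtain ⟨e1, e2, e3⟩ := hc
  show g 0 * x ^ 3 + (3 * g 1) * x ^ 2 * y + (3 * g 2) * x * y ^ 2 + g 3 * y ^ 3 = _
  rw [e1, e2, e3]
  ring

lemma none_eval {g : Fin 4 → ZMod p} (hc : Ccond g none) (x y : ZMod p) :
    bcfEval ![g 0, 3 * g 1, 3 * g 2, g 3] x y = g 3 * y ^ 3 := by
  obtain ⟨e0, e1, e2⟩ := hc
  show g 0 * x ^ 3 + (3 * g 1) * x ^ 2 * y + (3 * g 2) * x * y ^ 2 + g 3 * y ^ 3 = _
  rw [e0, e1, e2]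
  ring

lemma cond_some_g0 {g : Fin 4 → ZMod p} {t : ZMod p} (hc : Ccond g (some t)) (h0 : g 0 = 0) :
    g = 0 := by
  obtain ⟨e1, e2, e3⟩ := hc
  refine funext4 h0 ?_ ?_ ?_ <;> simp only [Pi.zero_apply]
  · rw [e1, h0]; ring
  · rw [e2, h0]; ring
  · rw [e3, h0]; ring

lemma cond_none_g3 {g : Fin 4 → ZMod p} (hc : Ccond g none) (h3 : g 3 = 0) : g = 0 := by
  obtain ⟨e0, e1, e2⟩ := hc
  refine funext4 e0 e1 e2 h3

lemma cnt_eq_zero {g : Fin 4 → ZMod p} (h : ∀ o, ¬ Ccond g o) : cnt g = 0 := by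
  unfold cnt
  rw [Finset.card_eq_zero, Finset.eq_empty_iff_forall_notMem]
  intro o ho
  exact h o (Finset.mem_filter.mp ho).2

lemma cnt_eq_one {g : Fin 4 → ZMod p} {x : Option (ZMod p)}
    (h : ∀ o, Ccond g o ↔ o = x) : cnt g = 1 := by
  unfold cnt
  have : Finset.univ.filter (fun o => Ccond g o) = {x} := by
    ext o
    simp [h o]
  rw [this, Finset.card_singleton]

lemma pow3_eq_zero {a : ZMod p} (h : a ^ 3 = 0) : a = 0 :=
  (pow_eq_zero_iff (by norm_num : (3 : ℕ) ≠ 0)).mp h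

lemma dual111 {g : Fin 4 → ZMod p} (hσ : HasDualFpType g FpType.t111) :
    g ≠ 0 ∧ cnt g = 0 := by
  obtain ⟨u₁, v₁, u₂, v₂, u₃, v₃, d12, d13, d23, hG⟩ := hσ
  have hgnz : g ≠ 0 := fun hg => lp_nz3 d12 d13 d23 ((hG.symm).trans (Gzero hg))
  refine ⟨hgnz, cnt_eq_zero fun o hc => ?_⟩
  cases o with
  | some t =>
    have hg0 : g 0 ≠ 0 := fun h0 => hgnz (cond_some_g0 hc h0)
    have he : ∀ x y : ZMod p, (u₁ * x + v₁ * y) * ((u₂ * x + v₂ * y) * (u₃ * x + v₃ * y))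
        = g 0 * (x - t * y) ^ 3 := fun x y => by
      rw [← bcfEval_linProd, ← hG, cube_eval hc]
    have h1 : g 0 * ((-v₁) - t * u₁) ^ 3 = 0 := by rw [← he (-v₁) u₁]; ring
    have h2 : g 0 * ((-v₂) - t * u₂) ^ 3 = 0 := by rw [← he (-v₂) u₂]; ring
    have hv₁ : v₁ = -(t * u₁) := by
      have := pow3_eq_zero ((mul_eq_zero.mp h1).resolve_left hg0)
      linear_combination -this
    have hv₂ : v₂ = -(t * u₂) := by
      have := pow3_eq_zero ((mul_eq_zero.mp h2).resolve_left hg0)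
      linear_combination -this
    exact d12 (by rw [hv₁, hv₂]; ring)
  | none =>
    have hg3 : g 3 ≠ 0 := fun h3 => hgnz (cond_none_g3 hc h3)
    have he : ∀ x y : ZMod p, (u₁ * x + v₁ * y) * ((u₂ * x + v₂ * y) * (u₃ * x + v₃ * y))
        = g 3 * y ^ 3 := fun x y => by
      rw [← bcfEval_linProd, ← hG, none_eval hc]
    have h1 : g 3 * u₁ ^ 3 = 0 := by rw [← he (-v₁) u₁]; ring
    have h2 : g 3 * u₂ ^ 3 = 0 := by rw [← he (-v₂) u₂]; ring
    have hu₁ : u₁ = 0 := pow3_eq_zero ((mul_eq_zero.mp h1).resolve_left hg3)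
    have hu₂ : u₂ = 0 := pow3_eq_zero ((mul_eq_zero.mp h2).resolve_left hg3)
    exact d12 (by rw [hu₁, hu₂]; ring)

lemma dual121 {g : Fin 4 → ZMod p} (hσ : HasDualFpType g FpType.t121) :
    g ≠ 0 ∧ cnt g = 0 := by
  obtain ⟨u₁, v₁, u₂, v₂, d, hG⟩ := hσ
  have hgnz : g ≠ 0 := fun hg => lp_nz121 d ((hG.symm).trans (Gzero hg))
  refine ⟨hgnz, cnt_eq_zero fun o hc => ?_⟩
  cases o with
  | some t =>
    have hg0 : g 0 ≠ 0 := fun h0 => hgnz (cond_some_g0 hc h0)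
    have he : ∀ x y : ZMod p, (u₁ * x + v₁ * y) * ((u₁ * x + v₁ * y) * (u₂ * x + v₂ * y))
        = g 0 * (x - t * y) ^ 3 := fun x y => by
      rw [← bcfEval_linProd, ← hG, cube_eval hc]
    have h1 : g 0 * ((-v₁) - t * u₁) ^ 3 = 0 := by rw [← he (-v₁) u₁]; ring
    have h2 : g 0 * ((-v₂) - t * u₂) ^ 3 = 0 := by rw [← he (-v₂) u₂]; ring
    have hv₁ : v₁ = -(t * u₁) := by
      have := pow3_eq_zero ((mul_eq_zero.mp h1).resolve_left hg0)
      linear_combination -this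
    have hv₂ : v₂ = -(t * u₂) := by
      have := pow3_eq_zero ((mul_eq_zero.mp h2).resolve_left hg0)
      linear_combination -this
    exact d (by rw [hv₁, hv₂]; ring)
  | none =>
    have hg3 : g 3 ≠ 0 := fun h3 => hgnz (cond_none_g3 hc h3)
    have he : ∀ x y : ZMod p, (u₁ * x + v₁ * y) * ((u₁ * x + v₁ * y) * (u₂ * x + v₂ * y))
        = g 3 * y ^ 3 := fun x y => by
      rw [← bcfEval_linProd, ← hG, none_eval hc]
    have h1 : g 3 * u₁ ^ 3 = 0 := by rw [← he (-v₁) u₁]; ring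
    have h2 : g 3 * u₂ ^ 3 = 0 := by rw [← he (-v₂) u₂]; ring
    have hu₁ : u₁ = 0 := pow3_eq_zero ((mul_eq_zero.mp h1).resolve_left hg3)
    have hu₂ : u₂ = 0 := pow3_eq_zero ((mul_eq_zero.mp h2).resolve_left hg3)
    exact d (by rw [hu₁, hu₂]; ring)

lemma dual3 {g : Fin 4 → ZMod p} (hσ : HasDualFpType g FpType.t3) :
    g ≠ 0 ∧ cnt g = 0 := by
  have hg0 : g 0 ≠ 0 := by
    have h := hσ 1 0 (by simp)
    rwa [eval_one_zero, G0] at h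
  refine ⟨ne_zero4 0 hg0, cnt_eq_zero fun o hc => ?_⟩
  cases o with
  | some t =>
    apply hσ t 1 (by simp)
    rw [cube_eval hc]
    ring
  | none =>
    apply hσ 1 0 (by simp)
    rw [none_eval hc]
    ring

lemma dual12 {g : Fin 4 → ZMod p} (hσ : HasDualFpType g FpType.t12) :
    g ≠ 0 ∧ cnt g = 0 := by
  obtain ⟨u, v, A, B, C, hnz, hirr, hG⟩ := hσ
  have hA : A ≠ 0 := by
    intro hA; apply hirr 1 0 (by simp); rw [hA]; ring
  have hgnz : g ≠ 0 := fun hg => lqp_nz hnz hirr ((hG.symm).trans (Gzero hg))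
  refine ⟨hgnz, cnt_eq_zero fun o hc => ?_⟩
  have e0 := congrFun hG 0
  have e1 := congrFun hG 1
  have e2 := congrFun hG 2
  rw [G0, lqp0] at e0
  rw [G1, lqp1] at e1
  rw [G2, lqp2] at e2
  cases o with
  | some t =>
    have hg0 : g 0 ≠ 0 := fun h0 => hgnz (cond_some_g0 hc h0)
    have he : ∀ x y : ZMod p, (u * x + v * y) * (A * x ^ 2 + B * x * y + C * y ^ 2)
        = g 0 * (x - t * y) ^ 3 := fun x y => by
      rw [← bcfEval_linQuadProd, ← hG, cube_eval hc]
    have h1 : g 0 * ((-v) - t * u) ^ 3 = 0 := by rw [← he (-v) u]; ring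
    have hveq : v = -(t * u) := by
      have := pow3_eq_zero ((mul_eq_zero.mp h1).resolve_left hg0)
      linear_combination -this
    have hu : u ≠ 0 := fun hu0 => hnz ⟨hu0, by rw [hveq, hu0]; ring⟩
    obtain ⟨c1, c2, c3⟩ := hc
    subst hveq
    have key : u * (A * t ^ 2 + B * t + C) = 0 := by
      linear_combination 6 * t * c1 + 3 * c2 - 3 * t ^ 2 * e0 - 2 * t * e1 - e2
    have hroot : A * t ^ 2 + B * t + C = 0 := (mul_eq_zero.mp key).resolve_left hu
    apply hirr t 1 (by simp)
    linear_combination hroot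
  | none =>
    obtain ⟨c0, c1, c2⟩ := hc
    rw [c0] at e0
    have hu : u = 0 := by
      rcases mul_eq_zero.mp e0.symm with h | h
      · exact h
      · exact absurd h hA
    rw [c1, hu] at e1
    have hv : v = 0 := by
      have : v * A = 0 := by linear_combination -e1
      rcases mul_eq_zero.mp this with h | h
      · exact h
      · exact absurd h hA
    exact hnz ⟨hu, hv⟩

lemma dual13 {g : Fin 4 → ZMod p} (h3z : (3 : ZMod p) ≠ 0)
    (hσ : HasDualFpType g FpType.t13) : g ≠ 0 ∧ cnt g = 1 := by
  obtain ⟨u, v, c, hc, hnz, hG⟩ := hσ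
  have e0 := congrFun hG 0
  have e1 := congrFun hG 1
  have e2 := congrFun hG 2
  have e3 := congrFun hG 3
  rw [G0] at e0
  rw [G1] at e1
  rw [G2] at e2
  rw [G3] at e3
  have hg0 : g 0 = c * u ^ 3 := by
    rw [e0]; show c * linProd u v u v u v 0 = _; rw [lp0]; ring
  have hg1 : g 1 = c * (u ^ 2 * v) := by
    apply mul_left_cancel₀ h3z
    rw [e1]; show c * linProd u v u v u v 1 = _; rw [lp1]; ring
  have hg2 : g 2 = c * (u * v ^ 2) := by
    apply mul_left_cancel₀ h3z
    rw [e2]; show c * linProd u v u v u v 2 = _; rw [lp2]; ring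
  have hg3 : g 3 = c * v ^ 3 := by
    rw [e3]; show c * linProd u v u v u v 3 = _; rw [lp3]; ring
  by_cases hu : u = 0
  · have hv : v ≠ 0 := fun hv => hnz ⟨hu, hv⟩
    have hg3' : g 3 ≠ 0 := by rw [hg3]; exact mul_ne_zero hc (pow_ne_zero 3 hv)
    refine ⟨ne_zero4 3 hg3', cnt_eq_one (x := none) fun o => ?_⟩
    cases o with
    | some t =>
      constructor
      · rintro ⟨c1, c2, c3⟩
        exfalso
        apply hg3'
        rw [c3, hg0, hu]
        ring
      · intro h; exact absurd h (by simp)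
    | none =>
      constructor
      · intro _; rfl
      · intro _
        refine ⟨by rw [hg0, hu]; ring, by rw [hg1, hu]; ring, by rw [hg2, hu]; ring⟩
  · have hg0' : g 0 ≠ 0 := by rw [hg0]; exact mul_ne_zero hc (pow_ne_zero 3 hu)
    refine ⟨ne_zero4 0 hg0', cnt_eq_one (x := some (-(v * u⁻¹))) fun o => ?_⟩
    cases o with
    | some t =>
      simp only [Option.some.injEq]
      constructor
      · rintro ⟨c1, c2, c3⟩
        rw [hg1, hg0] at c1
        have : c * u ^ 2 * (v + t * u) = 0 := by linear_combination c1
        rcases mul_eq_zero.mp this with h | h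
        · exact absurd h (mul_ne_zero hc (pow_ne_zero 2 hu))
        · field_simp
          linear_combination h
      · rintro rfl
        refine ⟨?_, ?_, ?_⟩
        · rw [hg1, hg0]; field_simp
        · rw [hg2, hg0]; field_simp
        · rw [hg3, hg0]; field_simp
    | none =>
      constructor
      · rintro ⟨c0, c1, c2⟩
        exact absurd c0 hg0'
      · intro h; exact absurd h (by simp)

lemma dual0 {g : Fin 4 → ZMod p} (h3z : (3 : ZMod p) ≠ 0)
    (hσ : HasDualFpType g FpType.t0) : g = 0 := by
  have e0 := congrFun hσ 0
  have e1 := congrFun hσ 1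
  have e2 := congrFun hσ 2
  have e3 := congrFun hσ 3
  rw [G0] at e0
  rw [G1] at e1
  rw [G2] at e2
  rw [G3] at e3
  simp only [Pi.zero_apply] at e0 e1 e2 e3
  refine funext4 e0 ?_ ?_ e3 <;> simp only [Pi.zero_apply]
  · rcases mul_eq_zero.mp e1 with h | h
    · exact absurd h h3z
    · exact h
  · rcases mul_eq_zero.mp e2 with h | h
    · exact absurd h h3z
    · exact h

end BCF

/-- The Fourier transform of `λ_p` over `𝔽_p` (`p ≠ 3`) equals `−1/p³` on dual types
`(111), (12), (3), (1²1)` and `(p²−1)/p³` on dual type `(1³)` and at `g = 0`; moreover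
the Fourier transform of `θ_{p²} = 2λ_{p²} − λ_p²` at `0` equals `1 − 1/p²`. -/
theorem fourier_of_lambda (p : ℕ) [Fact p.Prime] (hp3 : p ≠ 3) :
    (∀ (g : Fin 4 → ZMod p) (σ : FpType), HasDualFpType g σ →
      bcfFourier p lamFp g =
        match σ with
        | FpType.t111 => -1 / (p : ℂ) ^ 3
        | FpType.t12 => -1 / (p : ℂ) ^ 3
        | FpType.t3 => -1 / (p : ℂ) ^ 3
        | FpType.t121 => -1 / (p : ℂ) ^ 3
        | FpType.t13 => ((p : ℂ) ^ 2 - 1) / (p : ℂ) ^ 3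
        | FpType.t0 => ((p : ℂ) ^ 2 - 1) / (p : ℂ) ^ 3) ∧
    bcfFourier p (fun f => 2 * lamFpSq f - (lamFp f) ^ 2) 0 = 1 - 1 / (p : ℂ) ^ 2 := by
  have h3z : (3 : ZMod p) ≠ 0 := BCF.three_ne hp3
  have hp0' : (p : ℂ) ≠ 0 := BCF.hp0
  constructor
  · intro g σ hσ
    have hmain : bcfFourier p lamFp g
        = ((p : ℂ) ^ 4)⁻¹ * ((p : ℂ) ^ 3 * (BCF.cnt g : ℂ)
            - (if g = 0 then (p : ℂ) ^ 4 else 0) - p) := by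
      unfold bcfFourier
      rw [tsum_fintype]
      congr 1
      exact BCF.fourier_lam_sum g
    cases σ with
    | t111 =>
      obtain ⟨hg, hcnt⟩ := BCF.dual111 hσ
      rw [hmain, hcnt, if_neg hg]
      push_cast
      field_simp
      ring
    | t12 =>
      obtain ⟨hg, hcnt⟩ := BCF.dual12 hσ
      rw [hmain, hcnt, if_neg hg]
      push_cast
      field_simp
      ring
    | t3 =>
      obtain ⟨hg, hcnt⟩ := BCF.dual3 hσ
      rw [hmain, hcnt, if_neg hg]
      push_cast
      field_simp
      ring
    | t121 =>
      obtain ⟨hg, hcnt⟩ := BCF.dual121 hσ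
      rw [hmain, hcnt, if_neg hg]
      push_cast
      field_simp
      ring
    | t13 =>
      obtain ⟨hg, hcnt⟩ := BCF.dual13 h3z hσ
      rw [hmain, hcnt, if_neg hg]
      push_cast
      field_simp
      ring
    | t0 =>
      have hg := BCF.dual0 h3z hσ
      subst hg
      rw [hmain, BCF.cnt_zero, if_pos rfl]
      push_cast
      field_simp
      ring
  · have hmain : bcfFourier p (fun f => 2 * lamFpSq f - (lamFp f) ^ 2) 0
        = ((p : ℂ) ^ 4)⁻¹ * ((p : ℂ) ^ 4 - (p : ℂ) ^ 2) := by
      unfold bcfFourier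
      rw [tsum_fintype]
      congr 1
      have estep : ∀ f : Fin 4 → ZMod p,
          Complex.exp (2 * Real.pi * Complex.I
              * (ZMod.val (bcfPair f (0 : Fin 4 → ZMod p)) : ℂ) / (p : ℂ))
            * (2 * lamFpSq f - (lamFp f) ^ 2)
          = 2 * lamFpSq f - (lamFp f) ^ 2 := by
        intro f
        have h1 := BCF.psi_pair_zero (p := p) f
        unfold BCF.psi at h1
        rw [h1, one_mul]
      rw [Finset.sum_congr rfl fun f _ => estep f]
      exact BCF.theta_sum
    rw [hmain]
    field_simp
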